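/- arXiv:1505.08047 — 4 statements merged into one kernel-verified Lean document; each statement's English description precedes it below -/
import Mathlib

section
/- Let $L\subset\mathbb{R}^d$ be a Bravais lattice with first distance $\lambda_1$ and second distance $\lambda_2$, and fix constants $C>0$, $\mu>0$, $\varepsilon>0$, $p>d$ and $r_0\in[\lambda_1,\lambda_2)$. Let $\theta\in(0,\lambda_1/2)$ and let $V_\theta$ be a $d$-admissible potential with $|\mathcal{P}(L,V_\theta)|\le C\theta^{1+\mu}$ and $|V_\theta'(r)|\le\theta^{2+\varepsilon}r^{-p-1}$ for all $r>r_0$. Let $B=\{b_1,\dots,b_N\}\subset L$, $0\le\alpha_0<\lambda_1/2$, and let $B^{\alpha_0}$ be an $\alpha_0$-compact perturbation of $B$. Then $\sum_{i=1}^N\sum_{x\in L,\,x\ne b_i}\alpha_{i,x}V_\theta'(\|b_i-x\|)\ \ge\ -\frac{2C}{\lambda_1}N\theta^{1+\mu}\alpha_0-2\zeta_L^*(p)N\theta^{2+\varepsilon}-2\Big(\frac{\zeta_L^*(p)}{\lambda_1}+\zeta_L^*(p+1)\Big)N\theta^{2+\varepsilon}\alpha_0$. -/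
noncomputable section
open scoped BigOperators
open scoped Classical

/-- Points of `ℝ^d`. -/
abbrev Esp (d : ℕ) := EuclideanSpace ℝ (Fin d)

/-- `L` is a Bravais lattice of `ℝ^d`: the set of integer linear combinations
of a basis of `ℝ^d`. -/
def IsBravais {d : ℕ} (L : Set (Esp d)) : Prop :=
  ∃ b : Module.Basis (Fin d) ℝ (Esp d),
    L = Set.range fun c : Fin d → ℤ => ∑ i, (c i : ℝ) • b i

/-- First distance `λ₁` of the lattice. -/
def lam1 {d : ℕ} (L : Set (Esp d)) : ℝ :=
  sInf {r | ∃ x ∈ L, x ≠ 0 ∧ ‖x‖ = r}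

/-- Second distance `λ₂` of the lattice. -/
def lam2 {d : ℕ} (L : Set (Esp d)) : ℝ :=
  sInf {r | ∃ x ∈ L, lam1 L < ‖x‖ ∧ ‖x‖ = r}

/-- `m(λ)`: number of lattice points of norm `λ`. -/
def mCard {d : ℕ} (L : Set (Esp d)) (lam : ℝ) : ℕ :=
  Nat.card {x : Esp d // x ∈ L ∧ ‖x‖ = lam}

/-- A `d`-admissible potential: `C²` on `(0,∞)` and with absolutely convergent
lattice sums for `V`, `r V'` and `r² V''` on every Bravais lattice of `ℝ^d`. -/
def Admissible (d : ℕ) (V : ℝ → ℝ) : Prop :=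
  ContDiffOn ℝ 2 V (Set.Ioi 0) ∧
  ∀ L : Set (Esp d), IsBravais L →
    (Summable fun x : {x : Esp d // x ∈ L ∧ x ≠ 0} => |V ‖(x : Esp d)‖|) ∧
    (Summable fun x : {x : Esp d // x ∈ L ∧ x ≠ 0} =>
      ‖(x : Esp d)‖ * |deriv V ‖(x : Esp d)‖|) ∧
    (Summable fun x : {x : Esp d // x ∈ L ∧ x ≠ 0} =>
      ‖(x : Esp d)‖ ^ 2 * |deriv (deriv V) ‖(x : Esp d)‖|)

/-- Pressure of `L` submitted to `V`. -/
def pressure {d : ℕ} (L : Set (Esp d)) (V : ℝ → ℝ) : ℝ :=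
  -∑' x : {x : Esp d // x ∈ L ∧ x ≠ 0}, ‖(x : Esp d)‖ * deriv V ‖(x : Esp d)‖

/-- Lattice sum `ζ*_L(n) = ∑_{x ∈ L, ‖x‖ > λ₁} ‖x‖^{-n}`. -/
def zetaStar {d : ℕ} (L : Set (Esp d)) (n : ℝ) : ℝ :=
  ∑' x : {x : Esp d // x ∈ L ∧ lam1 L < ‖x‖}, ‖(x : Esp d)‖ ^ (-n)

/-- Lattice sum `ζ̄_L(n) = ∑_{x ∈ L, ‖x‖ > λ₁} (‖x‖ - λ₁)^{-n}`. -/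
def zetaBar {d : ℕ} (L : Set (Esp d)) (n : ℝ) : ℝ :=
  ∑' x : {x : Esp d // x ∈ L ∧ lam1 L < ‖x‖}, (‖(x : Esp d)‖ - lam1 L) ^ (-n)

/-- `f` realizes an `α`-compact perturbation `f '' B` of `B`:
each `b ∈ B` is moved to `f b` with `‖b - f b‖ ≤ α`, and `f b` is the unique point of the
perturbed family within distance `α` of `b`. -/
def IsPertMap {d : ℕ} (B : Set (Esp d)) (f : Esp d → Esp d) (α : ℝ) : Prop :=
  ∀ b ∈ B, ‖b - f b‖ ≤ α ∧ ∀ b' ∈ B, ‖b - f b'‖ ≤ α → f b' = f b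

/-- The point of the perturbed configuration corresponding to `x ∈ L`. -/
def pertPoint {d : ℕ} (B : Set (Esp d)) (f : Esp d → Esp d) (x : Esp d) : Esp d :=
  if x ∈ B then f x else x

/-- The perturbed configuration `L^α(B) = (L \ B) ∪ B^α`. -/
def pertLattice {d : ℕ} (L B : Set (Esp d)) (f : Esp d → Esp d) : Set (Esp d) :=
  (L \ B) ∪ f '' B

/-- `α_{i,x} = ‖b_i^α - y‖ - ‖b_i - x‖`. -/
def alphaCoef {d : ℕ} (B : Set (Esp d)) (f : Esp d → Esp d) (b x : Esp d) : ℝ :=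
  ‖f b - pertPoint B f x‖ - ‖b - x‖

/-- The energy difference `Δ_L^α(V; B)` between the perturbed and unperturbed
configurations. -/
def Delta {d : ℕ} (L : Set (Esp d)) (B : Finset (Esp d)) (f : Esp d → Esp d)
    (V : ℝ → ℝ) : ℝ :=
  (∑ b ∈ B, ∑' y : {y : Esp d // y ∈ pertLattice L ↑B f ∧ y ≠ f b}, V ‖f b - (y : Esp d)‖)
  - ∑ b ∈ B, ∑' x : {x : Esp d // x ∈ L ∧ x ≠ b}, V ‖b - (x : Esp d)‖

lemma bravais_sub_mem {d : ℕ} {L : Set (Esp d)} (h : IsBravais L) {a b : Esp d}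
    (ha : a ∈ L) (hb : b ∈ L) : a - b ∈ L := by
  obtain ⟨u, rfl⟩ := h
  obtain ⟨ca, rfl⟩ := ha
  obtain ⟨cb, rfl⟩ := hb
  refine ⟨fun i => ca i - cb i, ?_⟩
  simp only [Int.cast_sub, sub_smul, Finset.sum_sub_distrib]

lemma lam1_le {d : ℕ} {L : Set (Esp d)} {z : Esp d} (hz : z ∈ L) (hz0 : z ≠ 0) :
    lam1 L ≤ ‖z‖ := by
  apply csInf_le
  · exact ⟨0, by rintro r ⟨x, hx, h0, rfl⟩; exact norm_nonneg x⟩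
  · exact ⟨z, hz, hz0, rfl⟩

lemma lam2_le {d : ℕ} {L : Set (Esp d)} {z : Esp d} (hz : z ∈ L) (hz1 : lam1 L < ‖z‖) :
    lam2 L ≤ ‖z‖ := by
  apply csInf_le
  · exact ⟨0, by rintro r ⟨x, hx, h0, rfl⟩; exact norm_nonneg x⟩
  · exact ⟨z, hz, hz1, rfl⟩

lemma summable_int_one_add_abs {k : ℝ} (hk : 1 < k) :
    Summable fun n : ℤ => ((1 : ℝ) + |(n : ℝ)|) ^ (-k) := by
  have h1 : Summable fun n : ℤ => |(n : ℝ)| ^ (-k) := Real.summable_abs_int_rpow hk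
  have h2 : Summable fun n : ℤ => (if n = 0 then (1 : ℝ) else 0) :=
    summable_of_ne_finset_zero (s := {0}) (by intro b hb; simp at hb ⊢; exact hb)
  refine Summable.of_nonneg_of_le (fun n => Real.rpow_nonneg (by positivity) _)
    (fun n => ?_) (h1.add h2)
  by_cases hn : n = 0
  · subst hn
    simp [Real.zero_rpow (by linarith : -k ≠ 0), Real.one_rpow]
  · have h1n : (1 : ℝ) ≤ |(n : ℝ)| := by
      rw [← Int.cast_abs]; exact_mod_cast Int.one_le_abs (by simpa using hn)
    simp only [hn, if_false, add_zero]
    exact Real.rpow_le_rpow_of_nonpos (by linarith) (by linarith) (by linarith)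

lemma summable_pi_int (d : ℕ) {k : ℝ} (hk : 1 < k) :
    Summable fun c : Fin d → ℤ => ∏ i, ((1 : ℝ) + |(c i : ℝ)|) ^ (-k) := by
  induction d with
  | zero => exact Summable.of_finite
  | succ d ih =>
    have hprod := (summable_int_one_add_abs hk).mul_of_nonneg ih
      (fun n => Real.rpow_nonneg (by positivity) _)
      (fun c => Finset.prod_nonneg fun i _ => Real.rpow_nonneg (by positivity) _)
    have := ((Fin.consEquiv fun _ : Fin (d + 1) => ℤ).symm.summable_iff
      (f := fun p : ℤ × (Fin d → ℤ) =>
        ((1 : ℝ) + |(p.1 : ℝ)|) ^ (-k) * ∏ i, ((1 : ℝ) + |(p.2 i : ℝ)|) ^ (-k))).2 hprod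
    refine this.congr fun c => ?_
    rw [Fin.prod_univ_succ]
    rfl

lemma bravais_summable_rpow {d : ℕ} {L : Set (Esp d)} (hL : IsBravais L)
    (hlam : 0 < lam1 L) {n : ℝ} (hn : (d : ℝ) < n) :
    Summable fun z : {z : Esp d // z ∈ L ∧ z ≠ 0} => ‖(z : Esp d)‖ ^ (-n) := by
  rcases Nat.eq_zero_or_pos d with hd | hd
  · subst hd
    exfalso
    have : lam1 L = 0 := by
      have he : {r | ∃ x ∈ L, x ≠ 0 ∧ ‖x‖ = r} = ∅ := by
        ext r
        simp only [Set.mem_setOf_eq, Set.mem_empty_iff_false, iff_false]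
        rintro ⟨x, hx, hx0, rfl⟩
        exact hx0 (Subsingleton.elim x 0)
      rw [lam1, he, Real.sInf_empty]
    linarith
  obtain ⟨u, rfl⟩ := hL
  set φ : (Fin d → ℤ) → Esp d := fun c => ∑ i, (c i : ℝ) • u i with hφ
  set S := {z : Esp d // z ∈ Set.range φ ∧ z ≠ 0}
  have hd' : (0 : ℝ) < d := by exact_mod_cast hd
  obtain ⟨k, hkdef⟩ : ∃ k : ℝ, k = n / d := ⟨_, rfl⟩
  have hk : 1 < k := by rw [hkdef]; exact (one_lt_div hd').2 hn
  have hk0 : 0 ≤ k := by linarith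
  -- coordinate functional bound
  obtain ⟨K, hK⟩ : ∃ K : ℝ, K = (∑ i, ‖LinearMap.toContinuousLinearMap (u.coord i)‖) + 1 :=
    ⟨_, rfl⟩
  have hK1 : (1 : ℝ) ≤ K := by
    have : (0:ℝ) ≤ ∑ i, ‖LinearMap.toContinuousLinearMap (u.coord i)‖ :=
      Finset.sum_nonneg fun i _ => norm_nonneg _
    linarith
  have hcoord : ∀ (z : Esp d) (i : Fin d), |u.coord i z| ≤ K * ‖z‖ := by
    intro z i
    have h1 : |u.coord i z| ≤ ‖LinearMap.toContinuousLinearMap (u.coord i)‖ * ‖z‖ := by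
      have := (LinearMap.toContinuousLinearMap (u.coord i)).le_opNorm z
      simpa using this
    have h2 : ‖LinearMap.toContinuousLinearMap (u.coord i)‖ ≤ K := by
      rw [hK]
      have := Finset.single_le_sum
        (f := fun j => ‖LinearMap.toContinuousLinearMap (u.coord j)‖)
        (fun j _ => norm_nonneg _) (Finset.mem_univ i)
      linarith
    calc |u.coord i z| ≤ _ * ‖z‖ := h1
    _ ≤ K * ‖z‖ := by apply mul_le_mul_of_nonneg_right h2 (norm_nonneg z)
  obtain ⟨A, hA⟩ : ∃ A : ℝ, A = 1 / lam1 (Set.range φ) + K := ⟨_, rfl⟩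
  have hA0 : 0 < A := by
    have : 0 < 1 / lam1 (Set.range φ) := by positivity
    linarith
  -- choice of coordinates
  set ψ : S → (Fin d → ℤ) := fun z => z.2.1.choose with hψ
  have hψspec : ∀ z : S, φ (ψ z) = (z : Esp d) := fun z => z.2.1.choose_spec
  have hψinj : Function.Injective ψ := by
    intro z1 z2 h
    apply Subtype.ext
    rw [← hψspec z1, ← hψspec z2, h]
  have hGsum : Summable fun z : S => A ^ n * ∏ i, ((1:ℝ) + |(ψ z i : ℝ)|) ^ (-k) :=
    (((summable_pi_int d hk).comp_injective hψinj).mul_left (A ^ n))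
  refine Summable.of_nonneg_of_le (fun z => Real.rpow_nonneg (norm_nonneg _) _)
    (fun z => ?_) hGsum
  -- the pointwise bound
  set c : Fin d → ℤ := ψ z with hc
  have hzc : φ c = (z : Esp d) := hψspec z
  have hr0 : 0 < ‖(z : Esp d)‖ := norm_pos_iff.2 z.2.2
  have hrlam : lam1 (Set.range φ) ≤ ‖(z : Esp d)‖ := lam1_le z.2.1 z.2.2
  have hAr1 : (1:ℝ) ≤ A * ‖(z : Esp d)‖ := by
    have h1 : (1:ℝ) ≤ 1 / lam1 (Set.range φ) * ‖(z : Esp d)‖ := by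
      rw [div_mul_eq_mul_div, one_mul, le_div_iff₀ hlam, one_mul]
      exact hrlam
    nlinarith [norm_nonneg (z : Esp d)]
  have hbound : ∀ i, (1:ℝ) + |(c i : ℝ)| ≤ A * ‖(z : Esp d)‖ := by
    intro i
    have h1 : (c i : ℝ) = u.coord i (z : Esp d) := by
      rw [← hzc, hφ, Module.Basis.coord_apply, u.repr_sum_self]
    have := hcoord (z : Esp d) i
    rw [← h1] at this
    have h2 : (1:ℝ) ≤ 1 / lam1 (Set.range φ) * ‖(z : Esp d)‖ := by
      rw [div_mul_eq_mul_div, one_mul, le_div_iff₀ hlam, one_mul]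
      exact hrlam
    rw [hA, add_mul]
    linarith
  -- product bound
  have hP : ∏ i, ((1:ℝ) + |(c i : ℝ)|) ^ k ≤ (A * ‖(z : Esp d)‖) ^ n := by
    calc ∏ i, ((1:ℝ) + |(c i : ℝ)|) ^ k
        ≤ ∏ _i : Fin d, (A * ‖(z : Esp d)‖) ^ k := by
          apply Finset.prod_le_prod
          · intro i _; exact Real.rpow_nonneg (by positivity) _
          · intro i _; exact Real.rpow_le_rpow (by positivity) (hbound i) hk0
      _ = ((A * ‖(z : Esp d)‖) ^ k) ^ (d : ℕ) := by
          rw [Finset.prod_const, Finset.card_univ, Fintype.card_fin]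
      _ = (A * ‖(z : Esp d)‖) ^ n := by
          rw [← Real.rpow_natCast ((A * ‖(z : Esp d)‖) ^ k) d, ← Real.rpow_mul (by positivity)]
          congr 1
          rw [hkdef]
          field_simp
  have hPpos : 0 < ∏ i, ((1:ℝ) + |(c i : ℝ)|) ^ k :=
    Finset.prod_pos fun i _ => Real.rpow_pos_of_pos (by positivity) _
  have hinv : (∏ i, ((1:ℝ) + |(c i : ℝ)|) ^ k)⁻¹ = ∏ i, ((1:ℝ) + |(c i : ℝ)|) ^ (-k) := by
    rw [← Finset.prod_inv_distrib]
    congr 1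
    ext i
    rw [← Real.rpow_neg (by positivity)]
  have key : ‖(z : Esp d)‖ ^ (-n) ≤ A ^ n * (∏ i, ((1:ℝ) + |(c i : ℝ)|) ^ k)⁻¹ := by
    rw [Real.rpow_neg (norm_nonneg _)]
    have hAn : 0 < A ^ n := Real.rpow_pos_of_pos hA0 _
    have hrn : 0 < ‖(z : Esp d)‖ ^ n := Real.rpow_pos_of_pos hr0 _
    rw [Real.mul_rpow (le_of_lt hA0) (norm_nonneg _)] at hP
    have h2 : (A ^ n * ‖(z : Esp d)‖ ^ n)⁻¹ ≤ (∏ i, ((1:ℝ) + |(c i : ℝ)|) ^ k)⁻¹ :=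
      inv_anti₀ hPpos hP
    have h3 : (‖(z : Esp d)‖ ^ n)⁻¹ = A ^ n * (A ^ n * ‖(z : Esp d)‖ ^ n)⁻¹ := by
      field_simp
    rw [h3]
    exact mul_le_mul_of_nonneg_left h2 (le_of_lt hAn)
  calc ‖(z : Esp d)‖ ^ (-n) ≤ A ^ n * (∏ i, ((1:ℝ) + |(c i : ℝ)|) ^ k)⁻¹ := key
    _ = A ^ n * ∏ i, ((1:ℝ) + |(c i : ℝ)|) ^ (-k) := by rw [hinv]

/-- lower bound on the first-order term
`∑_{i=1}^N ∑_{x ∈ L, x ≠ b_i} α_{i,x} V'(‖b_i - x‖)`. -/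
theorem statement3 (d : ℕ) (L : Set (Esp d)) (hL : IsBravais L)
    (C μ ε p r0 : ℝ)
    (hC : 0 < C) (hμ : 0 < μ) (hε : 0 < ε) (hp : (d : ℝ) < p)
    (hr0 : lam1 L ≤ r0) (hr0' : r0 < lam2 L)
    (θ : ℝ) (hθ : 0 < θ) (hθ' : θ < lam1 L / 2)
    (V : ℝ → ℝ) (hadm : Admissible d V)
    (hP : |pressure L V| ≤ C * θ ^ (1 + μ))
    (hV' : ∀ r : ℝ, r0 < r → |deriv V r| ≤ θ ^ (2 + ε) * r ^ (-p - 1))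
    (N : ℕ) (B : Finset (Esp d)) (hB : ↑B ⊆ L) (hcard : B.card = N)
    (α0 : ℝ) (hα0 : 0 ≤ α0) (hα0' : α0 < lam1 L / 2)
    (f : Esp d → Esp d) (hf : IsPertMap ↑B f α0) :
    (∑ b ∈ B, ∑' x : {x : Esp d // x ∈ L ∧ x ≠ b},
        alphaCoef ↑B f b (x : Esp d) * deriv V ‖b - (x : Esp d)‖) ≥
      -(2 * C / lam1 L) * (N : ℝ) * θ ^ (1 + μ) * α0
      - 2 * zetaStar L p * (N : ℝ) * θ ^ (2 + ε)
      - 2 * (zetaStar L p / lam1 L + zetaStar L (p + 1)) * (N : ℝ) * θ ^ (2 + ε) * α0 := by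
  classical
  have hlam1 : 0 < lam1 L := by linarith
  obtain ⟨_hC2, hsums⟩ := hadm
  obtain ⟨_h1, h2, _h3⟩ := hsums L hL
  have hθ2ε : (0:ℝ) ≤ θ ^ (2 + ε) := le_of_lt (Real.rpow_pos_of_pos hθ _)
  -- abbreviations
  set Zp : ℝ := zetaStar L p with hZpdef
  set Zp1 : ℝ := zetaStar L (p + 1) with hZp1def
  have hZp0 : 0 ≤ Zp := tsum_nonneg fun z => Real.rpow_nonneg (norm_nonneg _) _
  -- summability of |V'|
  have hT : Summable fun z : {x : Esp d // x ∈ L ∧ x ≠ 0} => |deriv V ‖(z : Esp d)‖| := by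
    refine Summable.of_nonneg_of_le (fun z => abs_nonneg _) (fun z => ?_)
      (h2.mul_left (1 / lam1 L))
    have hz : lam1 L ≤ ‖(z : Esp d)‖ := lam1_le z.2.1 z.2.2
    have h' := mul_le_mul_of_nonneg_right hz (abs_nonneg (deriv V ‖(z : Esp d)‖))
    calc |deriv V ‖(z : Esp d)‖|
        = (1 / lam1 L) * (lam1 L * |deriv V ‖(z : Esp d)‖|) := by field_simp
      _ ≤ (1 / lam1 L) * (‖(z : Esp d)‖ * |deriv V ‖(z : Esp d)‖|) := by
          apply mul_le_mul_of_nonneg_left _ (by positivity)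
          linarith
  set T : ℝ := ∑' z : {x : Esp d // x ∈ L ∧ x ≠ 0}, |deriv V ‖(z : Esp d)‖| with hTdef
  -- the far subtype and its summability
  have hρinj : Function.Injective
      (fun j : {x : Esp d // x ∈ L ∧ lam1 L < ‖x‖} =>
        (⟨j.1, j.2.1, by
          intro h0
          have := j.2.2
          rw [h0, norm_zero] at this
          linarith⟩ : {x : Esp d // x ∈ L ∧ x ≠ 0})) := by
    intro a b h
    have : (a : Esp d) = (b : Esp d) :=
      congrArg (fun w : {x : Esp d // x ∈ L ∧ x ≠ 0} => (w : Esp d)) h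
    exact Subtype.ext this
  have hZp_sum : Summable fun j : {x : Esp d // x ∈ L ∧ lam1 L < ‖x‖} =>
      ‖(j : Esp d)‖ ^ (-p) :=
    ((bravais_summable_rpow hL hlam1 hp).comp_injective hρinj).congr fun j => rfl
  have hZp1_sum : Summable fun j : {x : Esp d // x ∈ L ∧ lam1 L < ‖x‖} =>
      ‖(j : Esp d)‖ ^ (-(p + 1)) :=
    ((bravais_summable_rpow hL hlam1 (by linarith : (d:ℝ) < p + 1)).comp_injective
      hρinj).congr fun j => rfl
  -- facts about far points
  have hfarr : ∀ j : {x : Esp d // x ∈ L ∧ lam1 L < ‖x‖}, r0 < ‖(j : Esp d)‖ := by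
    intro j
    have := lam2_le j.2.1 j.2.2
    linarith
  have hfarpos : ∀ j : {x : Esp d // x ∈ L ∧ lam1 L < ‖x‖}, 0 < ‖(j : Esp d)‖ :=
    fun j => lt_trans hlam1 j.2.2
  -- the signed pressure summand
  set g : {x : Esp d // x ∈ L ∧ x ≠ 0} → ℝ :=
    fun z => ‖(z : Esp d)‖ * deriv V ‖(z : Esp d)‖ with hgdef
  have hg_abs : ∀ z, |g z| = ‖(z : Esp d)‖ * |deriv V ‖(z : Esp d)‖| := by
    intro z
    rw [hgdef, abs_mul, abs_of_nonneg (norm_nonneg _)]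
  have hg_sum : Summable g := summable_abs_iff.mp (h2.congr fun z => (hg_abs z).symm)
  set s : Set {x : Esp d // x ∈ L ∧ x ≠ 0} := {z | ‖(z : Esp d)‖ ≤ lam1 L} with hsdef
  -- the equivalence between the far subtype and ↥sᶜ
  have hmem_sc : ∀ z : {x : Esp d // x ∈ L ∧ x ≠ 0}, z ∈ sᶜ ↔ lam1 L < ‖(z : Esp d)‖ := by
    intro z
    simp [hsdef]
  set e2 : {x : Esp d // x ∈ L ∧ lam1 L < ‖x‖} ≃ ↥sᶜ :=
    { toFun := fun j => ⟨⟨j.1, j.2.1, by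
        intro h0
        have := j.2.2
        rw [h0, norm_zero] at this
        linarith⟩, (hmem_sc _).2 j.2.2⟩
      invFun := fun w => ⟨w.1.1, w.1.2.1, (hmem_sc w.1).1 w.2⟩
      left_inv := fun j => Subtype.ext rfl
      right_inv := fun w => Subtype.ext (Subtype.ext rfl) } with he2def
  -- far part of T
  have hT_far_sum : Summable fun z : ↥sᶜ => |deriv V ‖((z : {x : Esp d // x ∈ L ∧ x ≠ 0}) : Esp d)‖| :=
    hT.subtype sᶜ
  have hg_far_sum : Summable fun z : ↥sᶜ => |g (z : {x : Esp d // x ∈ L ∧ x ≠ 0})| :=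
    (h2.subtype sᶜ).congr fun z => (hg_abs _).symm
  have hT_far : (∑' z : ↥sᶜ, |deriv V ‖((z : {x : Esp d // x ∈ L ∧ x ≠ 0}) : Esp d)‖|)
      ≤ θ ^ (2 + ε) * Zp1 := by
    rw [← e2.tsum_eq fun z : ↥sᶜ =>
      |deriv V ‖((z : {x : Esp d // x ∈ L ∧ x ≠ 0}) : Esp d)‖|]
    have hle : ∀ j : {x : Esp d // x ∈ L ∧ lam1 L < ‖x‖},
        |deriv V ‖(j : Esp d)‖| ≤ θ ^ (2 + ε) * ‖(j : Esp d)‖ ^ (-(p + 1)) := by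
      intro j
      have := hV' _ (hfarr j)
      rw [show -(p + 1) = -p - 1 by ring]
      exact this
    calc (∑' j : {x : Esp d // x ∈ L ∧ lam1 L < ‖x‖},
          |deriv V ‖((e2 j : ↥sᶜ) : {x : Esp d // x ∈ L ∧ x ≠ 0}).1‖|)
        ≤ ∑' j : {x : Esp d // x ∈ L ∧ lam1 L < ‖x‖},
            θ ^ (2 + ε) * ‖(j : Esp d)‖ ^ (-(p + 1)) := by
          apply Summable.tsum_le_tsum _ (hT_far_sum.comp_injective e2.injective) (hZp1_sum.mul_left _)
          intro j
          exact hle j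
      _ = θ ^ (2 + ε) * Zp1 := by rw [tsum_mul_left, hZp1def]; rfl
  -- far part of g
  have hg_far : (∑' z : ↥sᶜ, |g (z : {x : Esp d // x ∈ L ∧ x ≠ 0})|)
      ≤ θ ^ (2 + ε) * Zp := by
    rw [← e2.tsum_eq fun z : ↥sᶜ => |g (z : {x : Esp d // x ∈ L ∧ x ≠ 0})|]
    have hle : ∀ j : {x : Esp d // x ∈ L ∧ lam1 L < ‖x‖},
        |g (⟨j.1, j.2.1, by
          intro h0; have := j.2.2; rw [h0, norm_zero] at this; linarith⟩)|
          ≤ θ ^ (2 + ε) * ‖(j : Esp d)‖ ^ (-p) := by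
      intro j
      rw [hg_abs]
      have h1 := hV' _ (hfarr j)
      have hr : (0:ℝ) < ‖(j : Esp d)‖ := hfarpos j
      have h2' : ‖(j : Esp d)‖ * |deriv V ‖(j : Esp d)‖|
          ≤ ‖(j : Esp d)‖ * (θ ^ (2 + ε) * ‖(j : Esp d)‖ ^ (-p - 1)) :=
        mul_le_mul_of_nonneg_left h1 (norm_nonneg _)
      refine le_trans h2' (le_of_eq ?_)
      rw [show -p - 1 = -p + -1 by ring, Real.rpow_add hr, Real.rpow_neg_one]
      field_simp
    calc (∑' j : {x : Esp d // x ∈ L ∧ lam1 L < ‖x‖},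
          |g ((e2 j : ↥sᶜ) : {x : Esp d // x ∈ L ∧ x ≠ 0})|)
        ≤ ∑' j : {x : Esp d // x ∈ L ∧ lam1 L < ‖x‖},
            θ ^ (2 + ε) * ‖(j : Esp d)‖ ^ (-p) := by
          apply Summable.tsum_le_tsum _ (hg_far_sum.comp_injective e2.injective) (hZp_sum.mul_left _)
          intro j
          exact hle j
      _ = θ ^ (2 + ε) * Zp := by rw [tsum_mul_left, hZpdef]; rfl
  -- splitting of the pressure sum
  have hsplit_g : ((∑' z : ↥s, g ↑z) + ∑' z : ↥sᶜ, g ↑z) = ∑' z, g z :=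
    Summable.tsum_add_tsum_compl (hg_sum.subtype s) (hg_sum.subtype sᶜ)
  have habs_g_sc : |∑' z : ↥sᶜ, g ↑z| ≤ θ ^ (2 + ε) * Zp := by
    have h := norm_tsum_le_tsum_norm (f := fun z : ↥sᶜ => g ↑z)
      (by simpa only [Real.norm_eq_abs] using hg_far_sum)
    simp only [Real.norm_eq_abs] at h
    exact le_trans h hg_far
  have hpress : |∑' z, g z| ≤ C * θ ^ (1 + μ) := by
    have hgp : pressure L V
        = -∑' z : {x : Esp d // x ∈ L ∧ x ≠ 0}, g z := by rw [hgdef]; rfl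
    rw [hgp, abs_neg] at hP
    exact hP
  have hnorm_lam : ∀ z : ↥s, ‖((z : {x : Esp d // x ∈ L ∧ x ≠ 0}) : Esp d)‖ = lam1 L :=
    fun z => le_antisymm z.2 (lam1_le z.1.2.1 z.1.2.2)
  have hnear_g_abs : (∑' z : ↥s, |g ↑z|) ≤ C * θ ^ (1 + μ) + θ ^ (2 + ε) * Zp := by
    have hval : ∀ z : ↥s, g ↑z = lam1 L * deriv V (lam1 L) := by
      intro z
      rw [hgdef]
      dsimp only
      rw [hnorm_lam z]
    have heq : (∑' z : ↥s, |g ↑z|) = |∑' z : ↥s, g ↑z| := by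
      rcases le_or_gt 0 (deriv V (lam1 L)) with hW | hW
      · have hnn : ∀ z : ↥s, 0 ≤ g ↑z := fun z => by
          rw [hval z]; exact mul_nonneg (le_of_lt hlam1) hW
        rw [abs_of_nonneg (tsum_nonneg hnn)]
        exact tsum_congr fun z => abs_of_nonneg (hnn z)
      · have hnp : ∀ z : ↥s, g ↑z ≤ 0 := fun z => by
          rw [hval z]; exact mul_nonpos_of_nonneg_of_nonpos (le_of_lt hlam1) (le_of_lt hW)
        rw [abs_of_nonpos (tsum_nonpos hnp), ← tsum_neg]
        exact tsum_congr fun z => abs_of_nonpos (hnp z)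
    rw [heq]
    have h5 : (∑' z : ↥s, g ↑z) = (∑' z, g z) - ∑' z : ↥sᶜ, g ↑z := by
      linarith [hsplit_g]
    rw [h5]
    calc |(∑' z, g z) - ∑' z : ↥sᶜ, g ↑z|
        ≤ |∑' z, g z| + |∑' z : ↥sᶜ, g ↑z| := by
          rw [sub_eq_add_neg]
          refine le_trans (abs_add_le _ _) ?_
          rw [abs_neg]
      _ ≤ C * θ ^ (1 + μ) + θ ^ (2 + ε) * Zp := add_le_add hpress habs_g_sc
  have hT_near : (∑' z : ↥s, |deriv V ‖((z : {x : Esp d // x ∈ L ∧ x ≠ 0}) : Esp d)‖|)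
      ≤ (C * θ ^ (1 + μ) + θ ^ (2 + ε) * Zp) / lam1 L := by
    rw [le_div_iff₀ hlam1]
    have hmul : (∑' z : ↥s, |deriv V ‖((z : {x : Esp d // x ∈ L ∧ x ≠ 0}) : Esp d)‖|) * lam1 L
        = ∑' z : ↥s, |g ↑z| := by
      rw [← tsum_mul_right]
      refine tsum_congr fun z => ?_
      rw [hg_abs, hnorm_lam z]
      ring
    rw [hmul]
    exact hnear_g_abs
  have hTsplit : ((∑' z : ↥s, |deriv V ‖((z : {x : Esp d // x ∈ L ∧ x ≠ 0}) : Esp d)‖|)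
      + ∑' z : ↥sᶜ, |deriv V ‖((z : {x : Esp d // x ∈ L ∧ x ≠ 0}) : Esp d)‖|) = T :=
    Summable.tsum_add_tsum_compl (hT.subtype s) (hT.subtype sᶜ)
  have hTbound : T ≤ (C * θ ^ (1 + μ) + θ ^ (2 + ε) * Zp) / lam1 L + θ ^ (2 + ε) * Zp1 := by
    rw [← hTsplit]
    exact add_le_add hT_near hT_far
  have hT0 : 0 ≤ T := tsum_nonneg fun z => abs_nonneg _
  -- per-point estimate
  have key_b : ∀ b ∈ B, -(2 * α0 * T) ≤ ∑' x : {x : Esp d // x ∈ L ∧ x ≠ b},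
      alphaCoef ↑B f b (x : Esp d) * deriv V ‖b - (x : Esp d)‖ := by
    intro b hb
    have hbL : b ∈ L := hB hb
    set e : {x : Esp d // x ∈ L ∧ x ≠ b} ≃ {x : Esp d // x ∈ L ∧ x ≠ 0} :=
      { toFun := fun x => ⟨b - x.1, bravais_sub_mem hL hbL x.2.1,
          sub_ne_zero.2 (Ne.symm x.2.2)⟩
        invFun := fun z => ⟨b - z.1, bravais_sub_mem hL hbL z.2.1, fun h =>
          z.2.2 (sub_eq_self.mp h)⟩
        left_inv := fun x => Subtype.ext (by simp)
        right_inv := fun z => Subtype.ext (by simp) } with hedef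
    have hDsum : Summable fun x : {x : Esp d // x ∈ L ∧ x ≠ b} =>
        |deriv V ‖b - (x : Esp d)‖| :=
      (hT.comp_injective e.injective).congr fun x => rfl
    have halpha : ∀ x : {x : Esp d // x ∈ L ∧ x ≠ b},
        |alphaCoef ↑B f b (x : Esp d)| ≤ 2 * α0 := by
      intro x
      have hfb : ‖f b - b‖ ≤ α0 := by
        rw [norm_sub_rev]
        exact (hf b (Finset.mem_coe.2 hb)).1
      have hxy : ‖(x : Esp d) - pertPoint ↑B f (x : Esp d)‖ ≤ α0 := by
        by_cases hx : (x : Esp d) ∈ (↑B : Set (Esp d))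
        · simp only [pertPoint, if_pos hx]
          exact (hf _ hx).1
        · simp only [pertPoint, if_neg hx]
          simpa using hα0
      calc |alphaCoef ↑B f b (x : Esp d)|
          ≤ ‖(f b - pertPoint ↑B f (x : Esp d)) - (b - (x : Esp d))‖ := by
            simp only [alphaCoef]
            exact abs_norm_sub_norm_le _ _
        _ = ‖(f b - b) + ((x : Esp d) - pertPoint ↑B f (x : Esp d))‖ := by
            congr 1
            abel
        _ ≤ ‖f b - b‖ + ‖(x : Esp d) - pertPoint ↑B f (x : Esp d)‖ := norm_add_le _ _
        _ ≤ α0 + α0 := add_le_add hfb hxy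
        _ = 2 * α0 := by ring
    have habs_sum : Summable fun x : {x : Esp d // x ∈ L ∧ x ≠ b} =>
        |alphaCoef ↑B f b (x : Esp d) * deriv V ‖b - (x : Esp d)‖| := by
      refine Summable.of_nonneg_of_le (fun x => abs_nonneg _) (fun x => ?_)
        (hDsum.mul_left (2 * α0))
      rw [abs_mul]
      exact mul_le_mul_of_nonneg_right (halpha x) (abs_nonneg _)
    have hTeq : (∑' x : {x : Esp d // x ∈ L ∧ x ≠ b}, |deriv V ‖b - (x : Esp d)‖|) = T := by
      rw [hTdef, ← Equiv.tsum_eq e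
        (fun z : {x : Esp d // x ∈ L ∧ x ≠ 0} => |deriv V ‖(z : Esp d)‖|)]
      exact tsum_congr fun x => rfl
    have habs : |∑' x : {x : Esp d // x ∈ L ∧ x ≠ b},
        alphaCoef ↑B f b (x : Esp d) * deriv V ‖b - (x : Esp d)‖| ≤ 2 * α0 * T := by
      have h := norm_tsum_le_tsum_norm
        (f := fun x : {x : Esp d // x ∈ L ∧ x ≠ b} =>
          alphaCoef ↑B f b (x : Esp d) * deriv V ‖b - (x : Esp d)‖)
        (by simpa only [Real.norm_eq_abs] using habs_sum)
      simp only [Real.norm_eq_abs] at h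
      refine le_trans h ?_
      calc (∑' x : {x : Esp d // x ∈ L ∧ x ≠ b},
            |alphaCoef ↑B f b (x : Esp d) * deriv V ‖b - (x : Esp d)‖|)
          ≤ ∑' x : {x : Esp d // x ∈ L ∧ x ≠ b},
              2 * α0 * |deriv V ‖b - (x : Esp d)‖| := by
            refine Summable.tsum_le_tsum (fun x => ?_) habs_sum (hDsum.mul_left _)
            rw [abs_mul]
            exact mul_le_mul_of_nonneg_right (halpha x) (abs_nonneg _)
        _ = 2 * α0 * ∑' x : {x : Esp d // x ∈ L ∧ x ≠ b},
              |deriv V ‖b - (x : Esp d)‖| := tsum_mul_left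
        _ = 2 * α0 * T := by rw [hTeq]
    have := neg_abs_le (∑' x : {x : Esp d // x ∈ L ∧ x ≠ b},
        alphaCoef ↑B f b (x : Esp d) * deriv V ‖b - (x : Esp d)‖)
    linarith
  -- summing over B
  have hsum_lb : ∑ _b ∈ B, (-(2 * α0 * T)) ≤ ∑ b ∈ B, ∑' x : {x : Esp d // x ∈ L ∧ x ≠ b},
      alphaCoef ↑B f b (x : Esp d) * deriv V ‖b - (x : Esp d)‖ :=
    Finset.sum_le_sum key_b
  rw [Finset.sum_const, hcard, nsmul_eq_mul] at hsum_lb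
  -- final assembly
  have h6 : (N : ℝ) * -(2 * α0 * ((C * θ ^ (1 + μ) + θ ^ (2 + ε) * Zp) / lam1 L
      + θ ^ (2 + ε) * Zp1)) ≤ (N : ℝ) * (-(2 * α0 * T)) := by
    apply mul_le_mul_of_nonneg_left _ (Nat.cast_nonneg N)
    apply neg_le_neg
    exact mul_le_mul_of_nonneg_left hTbound (by positivity)
  have h8 : 0 ≤ 2 * Zp * (N : ℝ) * θ ^ (2 + ε) :=
    mul_nonneg (mul_nonneg (mul_nonneg (by norm_num) hZp0) (Nat.cast_nonneg N)) hθ2ε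
  have heq : -(2 * C / lam1 L) * (N : ℝ) * θ ^ (1 + μ) * α0
      - 2 * Zp * (N : ℝ) * θ ^ (2 + ε)
      - 2 * (Zp / lam1 L + Zp1) * (N : ℝ) * θ ^ (2 + ε) * α0
      = (N : ℝ) * -(2 * α0 * ((C * θ ^ (1 + μ) + θ ^ (2 + ε) * Zp) / lam1 L
          + θ ^ (2 + ε) * Zp1)) - 2 * Zp * (N : ℝ) * θ ^ (2 + ε) := by
    field_simp
    ring
  rw [ge_iff_le, heq]
  linarith
end
end

section
/- Let $L\subset\mathbb{R}^d$ be a Bravais lattice with first distance $\lambda_1$ and second distance $\lambda_2$, let $r_0\in[\lambda_1,\lambda_2)$, $\varepsilon>0$, $p>d$, $\theta\in[0,\lambda_1/2)$, and let $V$ be a $C^2$ potential with $|V''(r)|\le\theta^{2+\varepsilon}r^{-p-2}$ for all $r>r_0$. Let $B=\{b_1,\dots,b_N\}\subset L$, let $0\le\alpha_0<\lambda_1/2$ satisfy $2\alpha_0<\lambda_2-r_0$, and let $B^{\alpha_0}$ be an $\alpha_0$-compact perturbation of $B$. Then for any choice of real numbers $\xi_{i,x}\in(\|b_i-x\|-|\alpha_{i,x}|,\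 \|b_i-x\|+|\alpha_{i,x}|)$, one has $\sum_{i=1}^N\sum_{x\in L,\,\|x-b_i\|>\lambda_1}\alpha_{i,x}^2\,|V''(\xi_{i,x})|\ \le\ 4\,\theta^{2+\varepsilon}\alpha_0^2\,N\,\bar{\zeta}_L(p+2)$. -/
noncomputable section
open scoped BigOperators
open scoped Classical

lemma summable_int_max {s : ℝ} (hs : 1 < s) :
    Summable fun k : ℤ => (max 1 |(k : ℝ)|) ^ (-s) := by
  rw [← (Set.finite_singleton (0 : ℤ)).summable_compl_iff]
  refine ((Real.summable_abs_int_rpow hs).subtype _).of_nonneg_of_le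
    (fun k => Real.rpow_nonneg (le_max_of_le_left zero_le_one) _) ?_
  rintro ⟨k, hk⟩
  simp only [Set.mem_compl_iff, Set.mem_singleton_iff] at hk
  refine Real.rpow_le_rpow_of_nonpos ?_ (le_max_right _ _) (by linarith)
  simpa using hk

lemma summable_prod_max {s : ℝ} (hs : 1 < s) (n : ℕ) :
    Summable fun c : Fin n → ℤ => ∏ i, (max 1 |(c i : ℝ)|) ^ (-s) := by
  induction n with
  | zero => exact (hasSum_fintype _).summable
  | succ n ih =>
      have h := (summable_int_max hs).mul_of_nonneg ih (fun k => by positivity)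
        (fun c => Finset.prod_nonneg fun i _ => by positivity)
      rw [← (Fin.consEquiv (fun _ : Fin (n+1) => ℤ)).summable_iff]
      refine h.congr fun c => ?_
      simp [Fin.consEquiv, Fin.prod_univ_succ]

lemma IsBravais.sub_mem {d : ℕ} {L : Set (Esp d)} (hL : IsBravais L)
    {x y : Esp d} (hx : x ∈ L) (hy : y ∈ L) : x - y ∈ L := by
  obtain ⟨b, rfl⟩ := hL
  obtain ⟨c, rfl⟩ := hx
  obtain ⟨c', rfl⟩ := hy
  exact ⟨c - c', by simp [sub_smul, Finset.sum_sub_distrib]⟩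

lemma IsBravais.add_mem {d : ℕ} {L : Set (Esp d)} (hL : IsBravais L)
    {x y : Esp d} (hx : x ∈ L) (hy : y ∈ L) : x + y ∈ L := by
  obtain ⟨b, rfl⟩ := hL
  obtain ⟨c, rfl⟩ := hx
  obtain ⟨c', rfl⟩ := hy
  exact ⟨c + c', by simp [add_smul, Finset.sum_add_distrib]⟩

/-- The main summability lemma. -/
lemma main_summable {d : ℕ} {L : Set (Esp d)} (hL : IsBravais L) {q : ℝ} (hq : (d : ℝ) < q)
    {lam gap : ℝ} (hlam0 : 0 ≤ lam) (hgap : lam < gap)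
    (hmem : ∀ x ∈ L, lam < ‖x‖ → gap ≤ ‖x‖) :
    Summable fun x : {x : Esp d // x ∈ L ∧ lam < ‖x‖} => (‖(x : Esp d)‖ - lam) ^ (-q) := by
  obtain ⟨b, hLb⟩ := hL
  rcases Nat.eq_zero_or_pos d with hd | hd
  · subst hd
    have : IsEmpty {x : Esp 0 // x ∈ L ∧ lam < ‖x‖} := by
      refine ⟨fun x => ?_⟩
      have h0 : (x : Esp 0) = 0 := Subsingleton.elim _ _
      have h1 := x.2.2
      rw [h0, norm_zero] at h1
      linarith
    exact summable_empty
  have hgap0 : 0 < gap := lt_of_le_of_lt hlam0 hgap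
  have hd0 : (d : ℝ) ≠ 0 := Nat.cast_ne_zero.2 hd.ne'
  set T := b.equivFunL.toContinuousLinearMap with hT
  set C : ℝ := max ‖T‖ 1 with hC
  have hC1 : (1 : ℝ) ≤ C := le_max_right _ _
  have hC0 : 0 < C := lt_of_lt_of_le one_pos hC1
  have hrep : ∀ x : {x : Esp d // x ∈ L ∧ lam < ‖x‖},
      ∃ c : Fin d → ℤ, (∑ i, (c i : ℝ) • b i) = (x : Esp d) := by
    intro x
    have h := x.2.1
    have h2 : (x : Esp d) ∈ Set.range fun c : Fin d → ℤ => ∑ i, (c i : ℝ) • b i := by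
      rw [← hLb]; exact h
    exact h2
  choose ind hind using hrep
  have hinj : Function.Injective ind := by
    intro x y hxy
    apply Subtype.ext
    rw [← hind x, ← hind y, hxy]
  have hs' : 1 < q / d := by
    rw [lt_div_iff₀ (by exact_mod_cast hd)]
    linarith
  have hqnn : 0 ≤ q := le_trans (Nat.cast_nonneg d) hq.le
  set K : ℝ := (C * gap / (gap - lam)) ^ q with hK
  have hKnn : 0 ≤ K := Real.rpow_nonneg (div_nonneg (by positivity) (by linarith)) _
  refine (((summable_prod_max hs' d).comp_injective hinj).mul_left K).of_nonneg_of_le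
    (fun x => Real.rpow_nonneg (by linarith [hmem x x.2.1 x.2.2]) _) ?_
  intro x
  set c := ind x with hc
  have hxval : (∑ i, (c i : ℝ) • b i) = (x : Esp d) := hind x
  have hxgap : gap ≤ ‖(x : Esp d)‖ := hmem x x.2.1 x.2.2
  have hxpos : 0 < ‖(x : Esp d)‖ := lt_of_lt_of_le hgap0 hxgap
  set v : Fin d → ℝ := fun i => (c i : ℝ) with hv
  have hvx : b.equivFun (x : Esp d) = v := by
    have hx2 : (x : Esp d) = b.equivFun.symm v := by
      rw [Module.Basis.equivFun_symm_apply]; exact hxval.symm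
    rw [hx2, LinearEquiv.apply_symm_apply]
  have hvle : ‖v‖ ≤ C * ‖(x : Esp d)‖ := by
    have h1 : ‖T (x : Esp d)‖ ≤ ‖T‖ * ‖(x : Esp d)‖ := T.le_opNorm _
    have h2 : T (x : Esp d) = b.equivFun (x : Esp d) := rfl
    rw [h2, hvx] at h1
    exact h1.trans (mul_le_mul_of_nonneg_right (le_max_left _ _) (norm_nonneg _))
  have hcne : c ≠ 0 := by
    intro h
    have : (x : Esp d) = 0 := by rw [← hxval, h]; simp
    rw [this, norm_zero] at hxpos; exact lt_irrefl _ hxpos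
  have hv1 : 1 ≤ ‖v‖ := by
    obtain ⟨j, hj⟩ := Function.ne_iff.1 hcne
    have h1 : (1 : ℝ) ≤ |v j| := by
      have h2 : (1 : ℤ) ≤ |c j| := Int.one_le_abs (by simpa using hj)
      calc (1:ℝ) ≤ ((|c j| : ℤ) : ℝ) := by exact_mod_cast h2
        _ = |v j| := by simp [hv]
    calc (1:ℝ) ≤ |v j| := h1
      _ ≤ ‖v‖ := by simpa [Real.norm_eq_abs] using norm_le_pi_norm v j
  have hprod_le : (∏ i, max 1 |(c i : ℝ)|) ≤ ∏ _i : Fin d, ‖v‖ := by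
    refine Finset.prod_le_prod (fun i _ => by positivity) (fun i _ => ?_)
    refine max_le hv1 ?_
    simpa [Real.norm_eq_abs] using norm_le_pi_norm v i
  rw [Finset.prod_const, Finset.card_univ, Fintype.card_fin] at hprod_le
  have hprodpos : 0 < ∏ i, max 1 |(c i : ℝ)| :=
    Finset.prod_pos fun i _ => lt_of_lt_of_le one_pos (le_max_left _ _)
  have step1 : ‖(x : Esp d)‖ * ((gap - lam) / gap) ≤ ‖(x : Esp d)‖ - lam := by
    rw [← sub_nonneg]
    have heq : ‖(x:Esp d)‖ - lam - ‖(x:Esp d)‖ * ((gap - lam) / gap)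
        = lam * (‖(x:Esp d)‖ - gap) / gap := by field_simp; ring
    rw [heq]
    exact div_nonneg (mul_nonneg hlam0 (by linarith)) hgap0.le
  have step2 : ‖v‖ / C * ((gap - lam) / gap) ≤ ‖(x : Esp d)‖ - lam := by
    refine le_trans ?_ step1
    refine mul_le_mul_of_nonneg_right ?_ (div_nonneg (by linarith) hgap0.le)
    rw [div_le_iff₀ hC0, mul_comm]
    exact hvle
  have hbase_pos : 0 < ‖v‖ / C * ((gap - lam) / gap) :=
    mul_pos (div_pos (lt_of_lt_of_le one_pos hv1) hC0) (div_pos (by linarith) hgap0)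
  have main1 : (‖(x : Esp d)‖ - lam) ^ (-q) ≤ (‖v‖ / C * ((gap - lam) / gap)) ^ (-q) :=
    Real.rpow_le_rpow_of_nonpos hbase_pos step2 (by linarith)
  have hbnn : (0:ℝ) ≤ (gap - lam) / gap / C :=
    div_nonneg (div_nonneg (by linarith) hgap0.le) hC0.le
  have main2 : (‖v‖ / C * ((gap - lam) / gap)) ^ (-q) = ‖v‖ ^ (-q) * K := by
    rw [show ‖v‖ / C * ((gap - lam) / gap) = ‖v‖ * ((gap - lam) / gap / C) by ring]
    rw [Real.mul_rpow (norm_nonneg _) hbnn]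
    congr 1
    rw [Real.rpow_neg hbnn, ← Real.inv_rpow hbnn, hK]
    congr 1
    rw [div_div, inv_div]; ring
  have main3 : ‖v‖ ^ (-q) ≤ ∏ i, (max 1 |(c i : ℝ)|) ^ (-(q/d)) := by
    rw [Real.finset_prod_rpow _ _ (fun i _ => by positivity) _]
    have h1 : (‖v‖ ^ (d:ℕ)) ^ (-(q/d)) ≤ (∏ i, max 1 |(c i:ℝ)|) ^ (-(q/d)) :=
      Real.rpow_le_rpow_of_nonpos hprodpos hprod_le
        (neg_nonpos.2 (div_nonneg hqnn (Nat.cast_nonneg d)))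
    refine le_trans (le_of_eq ?_) h1
    rw [← Real.rpow_natCast ‖v‖ d, ← Real.rpow_mul (norm_nonneg _)]
    congr 1
    field_simp
  calc (‖(x : Esp d)‖ - lam) ^ (-q) ≤ ‖v‖ ^ (-q) * K := main1.trans_eq main2
    _ ≤ (∏ i, (max 1 |(c i : ℝ)|) ^ (-(q/d))) * K :=
        mul_le_mul_of_nonneg_right main3 hKnn
    _ = K * ((fun c : Fin d → ℤ => ∏ i, (max 1 |(c i : ℝ)|) ^ (-(q/d))) ∘ ind) x := by
        rw [mul_comm]; rfl
/-- upper bound on the long-range second-order term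
`∑_{i=1}^N ∑_{x ∈ L, ‖x - b_i‖ > λ₁} α_{i,x}² |V''(ξ_{i,x})| ≤ 4 θ^{2+ε} α₀² N ζ̄_L(p+2)`. -/
theorem statement4 (d : ℕ) (L : Set (Esp d)) (hL : IsBravais L)
    (r0 ε p : ℝ) (hr0 : lam1 L ≤ r0) (hr0' : r0 < lam2 L)
    (hε : 0 < ε) (hp : (d : ℝ) < p)
    (θ : ℝ) (hθ : 0 ≤ θ) (hθ' : θ < lam1 L / 2)
    (V : ℝ → ℝ) (hV : ContDiffOn ℝ 2 V (Set.Ioi (0 : ℝ)))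
    (hV'' : ∀ r : ℝ, r0 < r → |deriv (deriv V) r| ≤ θ ^ (2 + ε) * r ^ (-p - 2))
    (N : ℕ) (B : Finset (Esp d)) (hB : ↑B ⊆ L) (hcard : B.card = N)
    (α0 : ℝ) (hα0 : 0 ≤ α0) (hα0' : α0 < lam1 L / 2) (hα0r : 2 * α0 < lam2 L - r0)
    (f : Esp d → Esp d) (hf : IsPertMap ↑B f α0)
    (ξ : Esp d → Esp d → ℝ)
    (hξ : ∀ b ∈ B, ∀ x ∈ L, lam1 L < ‖x - b‖ →
      ξ b x ∈ Set.Ioo (‖b - x‖ - |alphaCoef ↑B f b x|) (‖b - x‖ + |alphaCoef ↑B f b x|)) :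
    (∑ b ∈ B, ∑' x : {x : Esp d // x ∈ L ∧ lam1 L < ‖(x : Esp d) - b‖},
        (alphaCoef ↑B f b (x : Esp d)) ^ 2 * |deriv (deriv V) (ξ b (x : Esp d))|) ≤
      4 * θ ^ (2 + ε) * α0 ^ 2 * (N : ℝ) * zetaBar L (p + 2) := by
  have hdnn : (0:ℝ) ≤ (d:ℝ) := Nat.cast_nonneg d
  have hlam1nn : 0 ≤ lam1 L :=
    Real.sInf_nonneg (by rintro r ⟨x, _, _, rfl⟩; exact norm_nonneg x)
  have hgap : lam1 L < lam2 L := lt_of_le_of_lt hr0 hr0'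
  have hlam2mem : ∀ z ∈ L, lam1 L < ‖z‖ → lam2 L ≤ ‖z‖ := by
    intro z hz hzn
    refine csInf_le ⟨0, ?_⟩ ⟨z, hz, hzn, rfl⟩
    rintro r ⟨y, _, _, rfl⟩; exact norm_nonneg y
  have hq : (d:ℝ) < p + 2 := by linarith
  have hsum0 := main_summable hL hq hlam1nn hgap hlam2mem
  have hθnn : 0 ≤ θ ^ (2+ε) := Real.rpow_nonneg hθ _
  set c0 : ℝ := 4 * θ ^ (2+ε) * α0 ^ 2 with hc0def
  have hc0 : 0 ≤ c0 := by positivity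
  have key : ∀ b ∈ B, (∑' x : {x : Esp d // x ∈ L ∧ lam1 L < ‖(x:Esp d) - b‖},
      (alphaCoef ↑B f b (x:Esp d))^2 * |deriv (deriv V) (ξ b (x:Esp d))|)
      ≤ c0 * zetaBar L (p+2) := by
    intro b hbB
    have hbL : b ∈ L := hB hbB
    let e : {x : Esp d // x ∈ L ∧ lam1 L < ‖(x:Esp d) - b‖} ≃
        {y : Esp d // y ∈ L ∧ lam1 L < ‖(y:Esp d)‖} :=
      { toFun := fun x => ⟨(x:Esp d) - b, hL.sub_mem x.2.1 hbL, x.2.2⟩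
        invFun := fun y => ⟨(y:Esp d) + b, hL.add_mem y.2.1 hbL, by
          have := y.2.2; simpa using this⟩
        left_inv := fun x => Subtype.ext (by simp)
        right_inv := fun y => Subtype.ext (by simp) }
    have hsum1 : Summable fun x : {x : Esp d // x ∈ L ∧ lam1 L < ‖(x:Esp d) - b‖} =>
        (‖(x:Esp d) - b‖ - lam1 L) ^ (-(p+2)) := by
      have h := hsum0.comp_injective e.injective
      exact h.congr (fun x => rfl)
    have htsum1 : (∑' x : {x : Esp d // x ∈ L ∧ lam1 L < ‖(x:Esp d) - b‖},
        (‖(x:Esp d) - b‖ - lam1 L) ^ (-(p+2))) = zetaBar L (p+2) :=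
      e.tsum_eq (fun y : {y : Esp d // y ∈ L ∧ lam1 L < ‖(y:Esp d)‖} =>
        (‖(y:Esp d)‖ - lam1 L) ^ (-(p+2)))
    have hpt : ∀ x : {x : Esp d // x ∈ L ∧ lam1 L < ‖(x:Esp d) - b‖},
        (alphaCoef ↑B f b (x:Esp d))^2 * |deriv (deriv V) (ξ b (x:Esp d))| ≤
        c0 * (‖(x:Esp d) - b‖ - lam1 L) ^ (-(p+2)) := by
      rintro ⟨x, hxL, hxn⟩
      simp only
      set α := alphaCoef ↑B f b x with hαdef
      have hαle : |α| ≤ 2 * α0 := by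
        have h1 : |‖f b - pertPoint ↑B f x‖ - ‖b - x‖|
            ≤ ‖(f b - pertPoint ↑B f x) - (b - x)‖ := abs_norm_sub_norm_le _ _
        have h2 : (f b - pertPoint ↑B f x) - (b - x)
            = (f b - b) - (pertPoint ↑B f x - x) := by abel
        have h3 : ‖f b - b‖ ≤ α0 := by rw [norm_sub_rev]; exact (hf b hbB).1
        have h4 : ‖pertPoint ↑B f x - x‖ ≤ α0 := by
          unfold pertPoint
          split_ifs with h
          · rw [norm_sub_rev]; exact (hf x h).1
          · simpa using hα0
        calc |α| ≤ ‖(f b - b) - (pertPoint ↑B f x - x)‖ := by rw [← h2]; exact h1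
          _ ≤ ‖f b - b‖ + ‖pertPoint ↑B f x - x‖ := norm_sub_le _ _
          _ ≤ 2 * α0 := by linarith
      have hxval2 : lam2 L ≤ ‖x - b‖ := hlam2mem (x - b) (hL.sub_mem hxL hbL) hxn
      have hξx := hξ b hbB x hxL hxn
      have hnorm_eq : ‖b - x‖ = ‖x - b‖ := norm_sub_rev _ _
      have hξlo := hξx.1
      rw [hnorm_eq] at hξlo
      have hξ_gt : r0 < ξ b x := by linarith
      have hξ_ge : ‖x - b‖ - lam1 L ≤ ξ b x := by linarith
      have hpos : 0 < ‖x - b‖ - lam1 L := by linarith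
      have hVle : |deriv (deriv V) (ξ b x)| ≤ θ^(2+ε) * (ξ b x) ^ (-p-2) := hV'' _ hξ_gt
      have hmono : (ξ b x) ^ (-p-2) ≤ (‖x - b‖ - lam1 L) ^ (-p-2) :=
        Real.rpow_le_rpow_of_nonpos hpos hξ_ge (by linarith)
      have hα2 : α^2 ≤ 4*α0^2 := by nlinarith [abs_nonneg α, sq_abs α]
      calc α^2 * |deriv (deriv V) (ξ b x)|
          ≤ (4*α0^2) * (θ^(2+ε) * (‖x - b‖ - lam1 L)^(-p-2)) := by
            refine mul_le_mul hα2 (hVle.trans (mul_le_mul_of_nonneg_left hmono hθnn))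
              (abs_nonneg _) (by positivity)
        _ = c0 * (‖x - b‖ - lam1 L)^(-(p+2)) := by
            rw [hc0def, show -(p+2) = -p-2 by ring]; ring
    have hsumg : Summable fun x : {x : Esp d // x ∈ L ∧ lam1 L < ‖(x:Esp d) - b‖} =>
        c0 * (‖(x:Esp d) - b‖ - lam1 L) ^ (-(p+2)) := hsum1.mul_left c0
    have hsumf : Summable fun x : {x : Esp d // x ∈ L ∧ lam1 L < ‖(x:Esp d) - b‖} =>
        (alphaCoef ↑B f b (x:Esp d))^2 * |deriv (deriv V) (ξ b (x:Esp d))| :=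
      hsumg.of_nonneg_of_le (fun x => mul_nonneg (sq_nonneg _) (abs_nonneg _)) hpt
    calc (∑' x : {x : Esp d // x ∈ L ∧ lam1 L < ‖(x:Esp d) - b‖},
        (alphaCoef ↑B f b (x:Esp d))^2 * |deriv (deriv V) (ξ b (x:Esp d))|)
        ≤ ∑' x : {x : Esp d // x ∈ L ∧ lam1 L < ‖(x:Esp d) - b‖},
            c0 * (‖(x:Esp d) - b‖ - lam1 L) ^ (-(p+2)) := Summable.tsum_le_tsum hpt hsumf hsumg
      _ = c0 * zetaBar L (p+2) := by rw [tsum_mul_left, htsum1]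
  calc (∑ b ∈ B, ∑' x : {x : Esp d // x ∈ L ∧ lam1 L < ‖(x : Esp d) - b‖},
        (alphaCoef ↑B f b (x : Esp d)) ^ 2 * |deriv (deriv V) (ξ b (x : Esp d))|)
      ≤ ∑ _b ∈ B, c0 * zetaBar L (p+2) := Finset.sum_le_sum key
    _ = 4 * θ ^ (2 + ε) * α0 ^ 2 * (N : ℝ) * zetaBar L (p + 2) := by
        rw [Finset.sum_const, hcard, nsmul_eq_mul, hc0def]; ring
end
end

section
/- Let $L\subset\mathbb{R}^d$ be a Bravais lattice with first distance $\lambda_1$ and second distance $\lambda_2$, and fix constants $C>0$, $\mu>0$, $\varepsilon>0$, $p>d$, $\eta>0$, $\delta>0$ and $r_0\in[\lambda_1,\lambda_2)$. Then there exists $\theta_0>0$ such that for every $\theta\in[0,\theta_0]$ and every $d$-admissible potential $V_\theta$ satisfying $|\mathcal{P}(L,V_\theta)|\le C\theta^{1+\mu}$, $|V_\theta''(r)|\le\theta^{2+\varepsilon}r^{-p-2}$ for all $r>r_0$, and $V_\theta''(r)\ge\eta$ for all $r\in(\lambda_1-\delta,\lambda_1+\delta)$, one has $\sum_{x\in L^*}\big[\|x\|^2V_\theta''(\|x\|)-\|x\|V_\theta'(\|x\|)\big]\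 \ge\ \lambda_1^2 m(\lambda_1)\eta-\theta^{2+\varepsilon}\zeta_L^*(p)-C\theta^{1+\mu}\ >\ 0$ (in particular the isothermal compressibility of $L$ submitted to $V_\theta$ is positive). -/
noncomputable section
open scoped BigOperators
open scoped Classical

lemma sumPiInt {g : ℤ → ℝ} (hg0 : ∀ k, 0 ≤ g k) (hg : Summable g) (n : ℕ) :
    Summable fun c : Fin n → ℤ => ∏ i, g (c i) := by
  induction n with
  | zero => exact .of_finite
  | succ n ih =>
    have h := hg.mul_of_nonneg ih hg0 (fun c => Finset.prod_nonneg fun i _ => hg0 _)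
    have := h.comp_injective (Fin.consEquiv (fun _ : Fin (n + 1) => ℤ)).symm.injective
    exact this.congr fun c => by
      simp only [Function.comp_apply, Fin.consEquiv, Equiv.coe_fn_symm_mk, Fin.prod_univ_succ]
      rfl

lemma gSummable {q : ℝ} (hq : 1 < q) : Summable fun k : ℤ => (max 1 |(k : ℝ)|) ^ (-q) := by
  have hnat : Summable fun n : ℕ => (max 1 (n : ℝ)) ^ (-q) := by
    rw [← summable_nat_add_iff 1]
    have h2 : Summable fun n : ℕ => ((n : ℝ) + 1) ^ (-q) := by
      have := (summable_nat_add_iff (f := fun n : ℕ => (n : ℝ) ^ (-q)) 1).mpr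
        (Real.summable_nat_rpow.mpr (by linarith))
      exact this.congr fun n => by push_cast; ring_nf
    exact h2.congr fun n => by
      rw [max_eq_right (by push_cast; linarith [Nat.cast_nonneg (α := ℝ) n])]
      push_cast; ring_nf
  apply Summable.of_nat_of_neg
  · exact hnat.congr fun n => by rw [Int.cast_natCast, abs_of_nonneg (Nat.cast_nonneg n)]
  · exact hnat.congr fun n => by push_cast; rw [abs_neg, abs_of_nonneg (Nat.cast_nonneg n)]


set_option maxHeartbeats 1000000 in
lemma latticeSummable {d : ℕ} (hd : 0 < d) (b : Module.Basis (Fin d) ℝ (Esp d)) {p : ℝ}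
    (hp : (d : ℝ) < p) :
    Summable fun c : Fin d → ℤ => ‖∑ i, (c i : ℝ) • b i‖ ^ (-p) := by
  have hdR : (0 : ℝ) < d := Nat.cast_pos.mpr hd
  have hp0 : 0 < p := lt_trans hdR hp
  set q : ℝ := p / d with hqdef
  have hq : 1 < q := (one_lt_div hdR).mpr hp
  set g : ℤ → ℝ := fun k => (max 1 |(k : ℝ)|) ^ (-q) with hgdef
  have hg0 : ∀ k, 0 ≤ g k := fun k => Real.rpow_nonneg (le_trans zero_le_one (le_max_left _ _)) _
  have hG : Summable fun c : Fin d → ℤ => ∏ i, g (c i) := sumPiInt hg0 (gSummable hq) d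
  set e : Esp d →L[ℝ] (Fin d → ℝ) := LinearMap.toContinuousLinearMap b.equivFun.toLinearMap with he
  set K : ℝ := ‖e‖ + 1 with hKdef
  have hK : 0 < K := by positivity
  have hKb : ∀ y, ‖e y‖ ≤ K * ‖y‖ := fun y =>
    (e.le_opNorm y).trans (by nlinarith [norm_nonneg y])
  refine Summable.of_nonneg_of_le (fun c => Real.rpow_nonneg (norm_nonneg _) _)
    (fun c => ?_) (hG.mul_left (K ^ p))
  by_cases hc : c = 0
  · subst hc
    simp only [Pi.zero_apply, Int.cast_zero, zero_smul, Finset.sum_const_zero, norm_zero]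
    rw [Real.zero_rpow (neg_ne_zero.mpr (ne_of_gt hp0))]
    exact mul_nonneg (Real.rpow_nonneg hK.le _) (Finset.prod_nonneg fun i _ => hg0 _)
  · -- c ≠ 0
    set cR : Fin d → ℝ := fun i => (c i : ℝ) with hcR
    have hecR : e (∑ i, (c i : ℝ) • b i) = cR := by
      have : (∑ i, (c i : ℝ) • b i) = b.equivFun.symm cR := by
        rw [Module.Basis.equivFun_symm_apply]
      rw [this]
      simp only [he, LinearMap.coe_toContinuousLinearMap', LinearEquiv.coe_coe,
        LinearEquiv.apply_symm_apply]
    obtain ⟨j, hj⟩ : ∃ j, c j ≠ 0 := by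
      by_contra h
      push_neg at h
      exact hc (funext h)
    have hcR1 : (1 : ℝ) ≤ ‖cR‖ := by
      have h1 : (1 : ℝ) ≤ |(c j : ℝ)| := by
        rw [← Int.cast_abs]
        exact_mod_cast Int.one_le_abs hj
      calc (1:ℝ) ≤ |(c j : ℝ)| := h1
        _ = ‖cR j‖ := by rw [Real.norm_eq_abs]
        _ ≤ ‖cR‖ := norm_le_pi_norm cR j
    set P : ℝ := ∏ i, max 1 |(c i : ℝ)| with hPdef
    have hP1 : (1 : ℝ) ≤ P := by
      rw [hPdef]
      calc (1 : ℝ) = ∏ _i : Fin d, (1 : ℝ) := by simp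
        _ ≤ ∏ i, max 1 |(c i : ℝ)| :=
          Finset.prod_le_prod (fun i _ => zero_le_one) (fun i _ => le_max_left _ _)
    have hP0 : (0 : ℝ) < P := lt_of_lt_of_le one_pos hP1
    have hPle : P ≤ ‖cR‖ ^ d := by
      have hb : ∀ i ∈ (Finset.univ : Finset (Fin d)), max 1 |(c i : ℝ)| ≤ ‖cR‖ := by
        intro i _
        apply max_le hcR1
        calc |(c i : ℝ)| = ‖cR i‖ := by rw [Real.norm_eq_abs]
          _ ≤ ‖cR‖ := norm_le_pi_norm cR i
      have h2 : P ≤ ∏ _i : Fin d, ‖cR‖ := by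
        rw [hPdef]
        exact Finset.prod_le_prod (fun i _ => le_trans zero_le_one (le_max_left _ _)) hb
      rwa [Finset.prod_const, Finset.card_univ, Fintype.card_fin] at h2
    have hroot : P ^ (1 / (d : ℝ)) ≤ ‖cR‖ := by
      have := Real.rpow_le_rpow hP0.le hPle (by positivity : (0:ℝ) ≤ 1 / d)
      rwa [← Real.rpow_natCast ‖cR‖ d, ← Real.rpow_mul (le_trans zero_le_one hcR1),
        mul_one_div, div_self (ne_of_gt hdR), Real.rpow_one] at this
    have hPr0 : (0 : ℝ) < P ^ (1 / (d : ℝ)) := Real.rpow_pos_of_pos hP0 _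
    have hnorml : P ^ (1 / (d : ℝ)) / K ≤ ‖∑ i, (c i : ℝ) • b i‖ := by
      rw [div_le_iff₀ hK]
      calc P ^ (1 / (d : ℝ)) ≤ ‖cR‖ := hroot
        _ = ‖e (∑ i, (c i : ℝ) • b i)‖ := by rw [hecR]
        _ ≤ K * ‖∑ i, (c i : ℝ) • b i‖ := hKb _
        _ = ‖∑ i, (c i : ℝ) • b i‖ * K := mul_comm _ _
    have hmain : ‖∑ i, (c i : ℝ) • b i‖ ^ (-p) ≤ (P ^ (1 / (d : ℝ)) / K) ^ (-p) :=
      Real.rpow_le_rpow_of_nonpos (by positivity) hnorml (neg_nonpos.mpr hp0.le)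
    refine hmain.trans (le_of_eq ?_)
    rw [Real.div_rpow hPr0.le hK.le, ← Real.rpow_mul hP0.le,
      show 1 / (d : ℝ) * (-p) = -q by rw [hqdef]; ring,
      Real.rpow_neg hK.le, div_eq_mul_inv, inv_inv, mul_comm, hPdef,
      ← Real.finset_prod_rpow _ _ (fun i _ => le_trans zero_le_one (le_max_left _ _)) (-q)]


lemma lattice_facts {d : ℕ} (hd : 0 < d) (b : Module.Basis (Fin d) ℝ (Esp d))
    {L : Set (Esp d)} (hLb : L = Set.range fun c : Fin d → ℤ => ∑ i, (c i : ℝ) • b i) :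
    0 < lam1 L ∧ (∃ x, x ∈ L ∧ ‖x‖ = lam1 L) ∧
    (∀ x ∈ L, x ≠ 0 → lam1 L ≤ ‖x‖) ∧
    (∀ x ∈ L, lam1 L < ‖x‖ → lam2 L ≤ ‖x‖) ∧
    {x : Esp d | x ∈ L ∧ ‖x‖ = lam1 L}.Finite := by
  have hspan : L = ((Submodule.span ℤ (Set.range ⇑b) : Submodule ℤ (Esp d)) : Set (Esp d)) := by
    rw [hLb]
    ext x
    simp only [Set.mem_range, SetLike.mem_coe, Submodule.mem_span_range_iff_exists_fun]
    constructor
    · rintro ⟨c, rfl⟩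
      exact ⟨c, by simp [Int.cast_smul_eq_zsmul]⟩
    · rintro ⟨c, rfl⟩
      exact ⟨c, by simp [Int.cast_smul_eq_zsmul]⟩
  haveI hdisc : DiscreteTopology
      ((Submodule.span ℤ (Set.range ⇑b) : Submodule ℤ (Esp d)) : Set (Esp d)) :=
    inferInstanceAs (DiscreteTopology (Submodule.span ℤ (Set.range ⇑b)))
  have hclosed : IsClosed ((Submodule.span ℤ (Set.range ⇑b) : Submodule ℤ (Esp d)) : Set (Esp d)) := by
    exact AddSubgroup.isClosed_of_discrete (H := (Submodule.span ℤ (Set.range ⇑b)).toAddSubgroup)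
  have hfin : ∀ R : ℝ, (Metric.closedBall (0 : Esp d) R ∩ L).Finite := by
    intro R
    rw [hspan]
    exact Metric.finite_isBounded_inter_isClosed (isDiscrete_iff_discreteTopology.mpr hdisc) (Metric.isBounded_closedBall) hclosed
  set i₀ : Fin d := ⟨0, hd⟩
  have hb0L : b i₀ ∈ L := by
    rw [hspan]
    exact Submodule.subset_span (Set.mem_range_self i₀)
  have hb0ne : b i₀ ≠ 0 := b.ne_zero i₀
  -- minimizer
  set F : Set (Esp d) := (Metric.closedBall 0 ‖b i₀‖ ∩ L) \ {0} with hF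
  have hFfin : F.Finite := ((hfin ‖b i₀‖).subset Set.diff_subset)
  have hFne : (b i₀) ∈ F := by
    refine ⟨⟨Metric.mem_closedBall.mpr ?_, hb0L⟩, hb0ne⟩
    simp [dist_eq_norm]
  obtain ⟨x0, hx0F, hx0min⟩ := hFfin.toFinset.exists_min_image (fun x => ‖x‖)
    ⟨b i₀, hFfin.mem_toFinset.mpr hFne⟩
  rw [hFfin.mem_toFinset] at hx0F
  obtain ⟨⟨hx0ball, hx0L⟩, hx0ne⟩ := hx0F
  rw [Set.mem_singleton_iff] at hx0ne
  have hx0n : 0 < ‖x0‖ := norm_pos_iff.mpr hx0ne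
  have hlb : ∀ r ∈ {r | ∃ x ∈ L, x ≠ 0 ∧ ‖x‖ = r}, ‖x0‖ ≤ r := by
    rintro r ⟨x, hxL, hxne, rfl⟩
    by_cases hx : ‖x‖ ≤ ‖b i₀‖
    · exact hx0min x (hFfin.mem_toFinset.mpr ⟨⟨Metric.mem_closedBall.mpr (by
        simpa [dist_eq_norm] using hx), hxL⟩, hxne⟩)
    · push_neg at hx
      calc ‖x0‖ ≤ ‖b i₀‖ := by simpa [dist_eq_norm] using hx0ball
        _ ≤ ‖x‖ := hx.le
  have hbdd : BddBelow {r | ∃ x ∈ L, x ≠ 0 ∧ ‖x‖ = r} := ⟨0, by rintro r ⟨x, _, _, rfl⟩; positivity⟩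
  have hlam1 : lam1 L = ‖x0‖ := by
    refine le_antisymm (csInf_le hbdd ⟨x0, hx0L, hx0ne, rfl⟩) (le_csInf ⟨‖x0‖, x0, hx0L, hx0ne, rfl⟩ hlb)
  refine ⟨hlam1 ▸ hx0n, ⟨x0, hx0L, hlam1.symm⟩, ?_, ?_, ?_⟩
  · exact fun x hxL hxne => csInf_le hbdd ⟨x, hxL, hxne, rfl⟩
  · intro x hxL hgt
    exact csInf_le ⟨0, by rintro r ⟨y, _, _, rfl⟩; positivity⟩ ⟨x, hxL, hgt, rfl⟩
  · apply (hfin (lam1 L)).subset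
    rintro x ⟨hxL, hxn⟩
    exact ⟨Metric.mem_closedBall.mpr (by simp [dist_eq_norm, hxn]), hxL⟩


set_option maxHeartbeats 2000000 in
/-- positivity of the isothermal compressibility: for `θ` small enough,
`∑_{x ∈ L*} [‖x‖² V_θ''(‖x‖) - ‖x‖ V_θ'(‖x‖)] ≥ λ₁² m(λ₁) η - θ^{2+ε} ζ*_L(p) - C θ^{1+μ} > 0`. -/
theorem statement9 (d : ℕ) (L : Set (Esp d)) (hL : IsBravais L)
    (C μ ε p η δ r0 : ℝ)
    (hC : 0 < C) (hμ : 0 < μ) (hε : 0 < ε) (hp : (d : ℝ) < p) (hη : 0 < η) (hδ : 0 < δ)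
    (hr0 : lam1 L ≤ r0) (hr0' : r0 < lam2 L) :
    ∃ θ0 : ℝ, 0 < θ0 ∧
      ∀ θ : ℝ, 0 ≤ θ → θ ≤ θ0 →
        ∀ V : ℝ → ℝ, Admissible d V →
          |pressure L V| ≤ C * θ ^ (1 + μ) →
          (∀ r : ℝ, r0 < r → |deriv (deriv V) r| ≤ θ ^ (2 + ε) * r ^ (-p - 2)) →
          (∀ r : ℝ, r ∈ Set.Ioo (lam1 L - δ) (lam1 L + δ) → η ≤ deriv (deriv V) r) →
          (∑' x : {x : Esp d // x ∈ L ∧ x ≠ 0},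
              (‖(x : Esp d)‖ ^ 2 * deriv (deriv V) ‖(x : Esp d)‖
                - ‖(x : Esp d)‖ * deriv V ‖(x : Esp d)‖)) ≥
            (lam1 L) ^ 2 * (mCard L (lam1 L) : ℝ) * η - θ ^ (2 + ε) * zetaStar L p
              - C * θ ^ (1 + μ) ∧
          (0 : ℝ) < (lam1 L) ^ 2 * (mCard L (lam1 L) : ℝ) * η - θ ^ (2 + ε) * zetaStar L p
              - C * θ ^ (1 + μ) := by
  classical
  -- dimension 0 is impossible given `lam1 L ≤ r0 < lam2 L`
  rcases Nat.eq_zero_or_pos d with hd0 | hd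
  · exfalso
    subst hd0
    have h1 : lam1 L = 0 := by
      have he : {r | ∃ x ∈ L, x ≠ 0 ∧ ‖x‖ = r} = ∅ := by
        ext r
        simp only [Set.mem_setOf_eq, Set.mem_empty_iff_false, iff_false]
        rintro ⟨x, -, hxne, -⟩
        exact hxne (Subsingleton.elim x 0)
      rw [lam1, he, Real.sInf_empty]
    have h2 : lam2 L = 0 := by
      have he : {r | ∃ x ∈ L, lam1 L < ‖x‖ ∧ ‖x‖ = r} = ∅ := by
        ext r
        simp only [Set.mem_setOf_eq, Set.mem_empty_iff_false, iff_false]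
        rintro ⟨x, -, hlt, -⟩
        rw [Subsingleton.elim x (0 : Esp 0), norm_zero, h1] at hlt
        exact lt_irrefl 0 hlt
      rw [lam2, he, Real.sInf_empty]
    rw [h1] at hr0
    rw [h2] at hr0'
    linarith
  obtain ⟨b, hLb⟩ := hL
  obtain ⟨hl1pos, ⟨x0, hx0L, hx0n⟩, hl1le, hl2le, hsph⟩ := lattice_facts hd b hLb
  -- summability of the zeta-type sum
  have hzsum : Summable fun x : {x : Esp d // x ∈ L ∧ lam1 L < ‖x‖} => ‖(x : Esp d)‖ ^ (-p) := by
    have hsum0 := latticeSummable hd b hp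
    have hmem : ∀ x : {x : Esp d // x ∈ L ∧ lam1 L < ‖x‖},
        ∃ c : Fin d → ℤ, ∑ i, (c i : ℝ) • b i = (x : Esp d) := by
      rintro ⟨x, hx1, hx2⟩
      rw [hLb] at hx1
      exact hx1
    set ψ : {x : Esp d // x ∈ L ∧ lam1 L < ‖x‖} → (Fin d → ℤ) :=
      fun x => (hmem x).choose with hψ
    have hψs : ∀ x, ∑ i, ((ψ x) i : ℝ) • b i = (x : Esp d) := fun x => (hmem x).choose_spec
    have hψinj : Function.Injective ψ := by
      intro x y hxy
      apply Subtype.ext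
      rw [← hψs x, ← hψs y, hxy]
    exact (hsum0.comp_injective hψinj).congr fun x => by rw [Function.comp_apply, hψs x]
  have hZ0 : 0 ≤ zetaStar L p :=
    tsum_nonneg fun x => Real.rpow_nonneg (norm_nonneg _) _
  -- `m(λ₁) ≥ 1`
  haveI hfinsub : Finite {x : Esp d // x ∈ L ∧ ‖x‖ = lam1 L} := hsph.to_subtype
  have hm1 : 1 ≤ (mCard L (lam1 L) : ℝ) := by
    haveI : Nonempty {x : Esp d // x ∈ L ∧ ‖x‖ = lam1 L} := ⟨⟨x0, hx0L, hx0n⟩⟩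
    have : 0 < mCard L (lam1 L) := Nat.card_pos
    exact_mod_cast this
  set Z : ℝ := zetaStar L p with hZdef
  set m : ℝ := (mCard L (lam1 L) : ℝ) with hmdef
  set c0 : ℝ := lam1 L ^ 2 * m * η with hc0def
  have hc0 : 0 < c0 := by
    have := mul_pos (mul_pos (pow_pos hl1pos 2) (lt_of_lt_of_le one_pos hm1)) hη
    simpa [hc0def] using this
  set θ0 : ℝ := min 1 (c0 / (2 * (Z + C + 1))) with hθ0def
  have hden : 0 < 2 * (Z + C + 1) := by nlinarith
  have hθ0pos : 0 < θ0 := lt_min one_pos (by positivity)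
  have hθ01 : θ0 ≤ 1 := min_le_left _ _
  refine ⟨θ0, hθ0pos, ?_⟩
  intro θ hθnn hθle V hV hpress hder2 hder2'
  have hθpow : ∀ s : ℝ, 1 ≤ s → θ ^ s ≤ θ0 := by
    intro s hs
    calc θ ^ s ≤ θ0 ^ s := Real.rpow_le_rpow hθnn hθle (by linarith)
      _ ≤ θ0 ^ (1 : ℝ) := Real.rpow_le_rpow_of_exponent_ge hθ0pos hθ01 hs
      _ = θ0 := Real.rpow_one θ0
  have hθp1 : θ ^ (1 + μ) ≤ θ0 := hθpow _ (by linarith)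
  have hθp2 : θ ^ (2 + ε) ≤ θ0 := hθpow _ (by linarith)
  have hθp1n : 0 ≤ θ ^ (1 + μ) := Real.rpow_nonneg hθnn _
  have hθp2n : 0 ≤ θ ^ (2 + ε) := Real.rpow_nonneg hθnn _
  -- positivity of the right-hand side
  have hpos : (0 : ℝ) < lam1 L ^ 2 * m * η - θ ^ (2 + ε) * Z - C * θ ^ (1 + μ) := by
    have h1 : θ ^ (2 + ε) * Z ≤ θ0 * Z := mul_le_mul_of_nonneg_right hθp2 hZ0
    have h2 : C * θ ^ (1 + μ) ≤ C * θ0 := mul_le_mul_of_nonneg_left hθp1 hC.le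
    have h3 : θ0 ≤ c0 / (2 * (Z + C + 1)) := min_le_right _ _
    have key : θ0 * (Z + C) < c0 := by
      have h4 : θ0 * (Z + C) ≤ c0 / (2 * (Z + C + 1)) * (Z + C) :=
        mul_le_mul_of_nonneg_right h3 (by positivity)
      have h5 : c0 / (2 * (Z + C + 1)) * (Z + C) < c0 := by
        rw [div_mul_eq_mul_div, div_lt_iff₀ hden]
        nlinarith
      linarith
    have : θ0 * Z + C * θ0 = θ0 * (Z + C) := by ring
    rw [hc0def] at key
    nlinarith
  refine ⟨?_, hpos⟩
  -- summability of the two lattice sums for V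
  obtain ⟨-, hV1, hV2⟩ := hV.2 L ⟨b, hLb⟩
  have hf2sum : Summable fun x : {x : Esp d // x ∈ L ∧ x ≠ 0} =>
      ‖(x : Esp d)‖ ^ 2 * deriv (deriv V) ‖(x : Esp d)‖ := by
    apply summable_abs_iff.mp
    apply hV2.congr
    intro x
    rw [abs_mul, abs_of_nonneg (by positivity : (0:ℝ) ≤ ‖(x : Esp d)‖ ^ 2)]
  have hf1sum : Summable fun x : {x : Esp d // x ∈ L ∧ x ≠ 0} =>
      ‖(x : Esp d)‖ * deriv V ‖(x : Esp d)‖ := by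
    apply summable_abs_iff.mp
    apply hV1.congr
    intro x
    rw [abs_mul, abs_of_nonneg (norm_nonneg (x : Esp d))]
  -- the sets involved in the splitting
  set A1 : Set (Esp d) := {x | x ∈ L ∧ ‖x‖ = lam1 L} with hA1def
  set A2 : Set (Esp d) := {x | x ∈ L ∧ lam1 L < ‖x‖} with hA2def
  set f2 : Esp d → ℝ := fun y => ‖y‖ ^ 2 * deriv (deriv V) ‖y‖ with hf2def
  have hunion : {x : Esp d | x ∈ L ∧ x ≠ 0} = A1 ∪ A2 := by
    ext x
    simp only [Set.mem_setOf_eq, Set.mem_union, hA1def, hA2def]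
    constructor
    · rintro ⟨hxL, hxne⟩
      rcases eq_or_lt_of_le (hl1le x hxL hxne) with h | h
      · exact Or.inl ⟨hxL, h.symm⟩
      · exact Or.inr ⟨hxL, h⟩
    · rintro (⟨hxL, hxe⟩ | ⟨hxL, hxlt⟩)
      · refine ⟨hxL, fun h => ?_⟩
        rw [h, norm_zero] at hxe
        exact absurd hxe.symm (ne_of_gt hl1pos)
      · refine ⟨hxL, fun h => ?_⟩
        rw [h, norm_zero] at hxlt
        exact absurd hxlt (not_lt.mpr hl1pos.le)
  have hdisj : Disjoint A1 A2 := by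
    rw [Set.disjoint_left]
    rintro x ⟨-, hx1⟩ ⟨-, hx2⟩
    rw [hx1] at hx2
    exact lt_irrefl _ hx2
  haveI hA1fin : Finite ↥A1 := hsph.to_subtype
  have hA1sum : Summable fun x : ↥A1 => f2 x := Summable.of_finite
  have hf2sub : Summable (f2 ∘ (Subtype.val : ↥{x : Esp d | x ∈ L ∧ x ≠ 0} → Esp d)) := hf2sum
  have hA2sum : Summable fun x : ↥A2 => f2 x := by
    have hind := summable_subtype_iff_indicator.mp hf2sub
    rw [hunion] at hind
    have := hind.indicator A2
    rw [Set.indicator_indicator, Set.inter_eq_left.mpr Set.subset_union_right] at this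
    exact summable_subtype_iff_indicator.mpr this
  -- split the sum of f2
  have hsplit : ∑' x : {x : Esp d // x ∈ L ∧ x ≠ 0}, f2 x
      = (∑' x : ↥A1, f2 x) + ∑' x : ↥A2, f2 x := by
    have h0 : ∑' x : {x : Esp d // x ∈ L ∧ x ≠ 0}, f2 x
        = ∑' x : ↥{x : Esp d | x ∈ L ∧ x ≠ 0}, f2 x := rfl
    rw [h0, hunion]
    exact hA1sum.tsum_union_disjoint hdisj hA2sum
  -- lower bound on the `A1` part
  have hA1lb : lam1 L ^ 2 * m * η ≤ ∑' x : ↥A1, f2 x := by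
    have hterm : ∀ x : ↥A1, lam1 L ^ 2 * η ≤ f2 x := by
      rintro ⟨x, hxL, hxn⟩
      have hV'' : η ≤ deriv (deriv V) (lam1 L) :=
        hder2' (lam1 L) ⟨by linarith, by linarith⟩
      simp only [hf2def]
      rw [hxn]
      exact mul_le_mul_of_nonneg_left hV'' (by positivity)
    have hconst : ∑' _ : ↥A1, (lam1 L ^ 2 * η) = (Nat.card ↥A1 : ℝ) * (lam1 L ^ 2 * η) := by
      rw [tsum_const, nsmul_eq_mul]
    have hcard : (Nat.card ↥A1 : ℝ) = m := rfl
    have := Summable.tsum_le_tsum hterm (Summable.of_finite) hA1sum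
    rw [hconst, hcard] at this
    nlinarith [this]
  -- lower bound on the `A2` part
  have hA2lb : -(θ ^ (2 + ε) * Z) ≤ ∑' x : ↥A2, f2 x := by
    have hterm : ∀ x : ↥A2, -(θ ^ (2 + ε) * ‖(x : Esp d)‖ ^ (-p)) ≤ f2 x := by
      rintro ⟨x, hxL, hxlt⟩
      have hx0 : (0 : ℝ) < ‖x‖ := lt_trans hl1pos hxlt
      have hxr0 : r0 < ‖x‖ := lt_of_lt_of_le hr0' (hl2le x hxL hxlt)
      have hb2 := hder2 ‖x‖ hxr0
      have hkey : ‖x‖ ^ 2 * |deriv (deriv V) ‖x‖| ≤ θ ^ (2 + ε) * ‖x‖ ^ (-p) := by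
        have h6 : ‖x‖ ^ 2 * |deriv (deriv V) ‖x‖| ≤ ‖x‖ ^ 2 * (θ ^ (2 + ε) * ‖x‖ ^ (-p - 2)) :=
          mul_le_mul_of_nonneg_left hb2 (by positivity)
        have h7 : (‖x‖ : ℝ) ^ (2 : ℕ) * ‖x‖ ^ (-p - 2) = ‖x‖ ^ (-p) := by
          rw [← Real.rpow_natCast ‖x‖ 2, ← Real.rpow_add hx0]
          norm_num
        calc ‖x‖ ^ 2 * |deriv (deriv V) ‖x‖| ≤ ‖x‖ ^ 2 * (θ ^ (2 + ε) * ‖x‖ ^ (-p - 2)) := h6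
          _ = θ ^ (2 + ε) * (‖x‖ ^ (2 : ℕ) * ‖x‖ ^ (-p - 2)) := by ring
          _ = θ ^ (2 + ε) * ‖x‖ ^ (-p) := by rw [h7]
      have habs : |f2 x| ≤ θ ^ (2 + ε) * ‖x‖ ^ (-p) := by
        simp only [hf2def]
        calc |‖x‖ ^ 2 * deriv (deriv V) ‖x‖| = ‖x‖ ^ 2 * |deriv (deriv V) ‖x‖| := by
              rw [abs_mul, abs_of_nonneg (by positivity : (0:ℝ) ≤ ‖x‖ ^ 2)]
          _ ≤ θ ^ (2 + ε) * ‖x‖ ^ (-p) := hkey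
      calc -(θ ^ (2 + ε) * ‖x‖ ^ (-p)) ≤ -|f2 x| := neg_le_neg habs
        _ ≤ f2 x := neg_abs_le _
    have hsumlhs : Summable fun x : ↥A2 => -(θ ^ (2 + ε) * ‖(x : Esp d)‖ ^ (-p)) :=
      ((hzsum.mul_left (θ ^ (2 + ε)))).neg
    have := Summable.tsum_le_tsum hterm hsumlhs hA2sum
    have heq : ∑' x : ↥A2, -(θ ^ (2 + ε) * ‖(x : Esp d)‖ ^ (-p)) = -(θ ^ (2 + ε) * Z) := by
      rw [tsum_neg, tsum_mul_left]
      rfl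
    rw [heq] at this
    exact this
  -- the pressure bound
  have hpsum : ∑' x : {x : Esp d // x ∈ L ∧ x ≠ 0},
      ‖(x : Esp d)‖ * deriv V ‖(x : Esp d)‖ ≤ C * θ ^ (1 + μ) := by
    have hp1 : pressure L V = -∑' x : {x : Esp d // x ∈ L ∧ x ≠ 0},
        ‖(x : Esp d)‖ * deriv V ‖(x : Esp d)‖ := rfl
    have := (abs_le.mp hpress).1
    rw [hp1] at this
    linarith
  -- final assembly
  have hts : ∑' x : {x : Esp d // x ∈ L ∧ x ≠ 0},
      (‖(x : Esp d)‖ ^ 2 * deriv (deriv V) ‖(x : Esp d)‖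
        - ‖(x : Esp d)‖ * deriv V ‖(x : Esp d)‖)
      = (∑' x : {x : Esp d // x ∈ L ∧ x ≠ 0}, f2 x)
        - ∑' x : {x : Esp d // x ∈ L ∧ x ≠ 0}, ‖(x : Esp d)‖ * deriv V ‖(x : Esp d)‖ :=
    Summable.tsum_sub hf2sum hf1sum
  rw [ge_iff_le, hts, hsplit]
  have : θ ^ (2 + ε) * zetaStar L p = θ ^ (2 + ε) * Z := rfl
  rw [this]
  linarith
end
end

section
/- Let $V:(0,\infty)\to\mathbb{R}$ be a $C^2$ function with $V(r)=0$ for all $r\ge 5/2$, $V'(1)=V'(2)=0$, $V''(1)=-1$ and $V''(2)=1/3$. Then there exists $\alpha_1>0$ such that for every $\alpha\in(0,\alpha_1)$, $\Delta^{\alpha}:=\sum_{x\in\mathbb{Z},\,x\ne 0}\big[V(|x-\alpha|)-V(|x|)\big]<0$. Consequently, the lattice $\mathbb{Z}$ is not a $1$-compact local minimum for the total $V$-energy: for every $\alpha_0>0$ there exist $\alpha\in[0,\alpha_0)$ and an $\alpha$-compact perturbation $\{\alpha\}$ of $B=\{0\}\subset\mathbb{Z}$ with $\Delta_{\mathbb{Z}}^{\alpha}(V;B)<0$.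 -/
/-- for a `C²` potential `V` on `(0,∞)` vanishing on `[5/2,∞)` with
`V'(1) = V'(2) = 0`, `V''(1) = -1`, `V''(2) = 1/3`, there is `α₁ > 0` such that
`Δ^α = ∑_{x ∈ ℤ*} [V(|x - α|) - V(|x|)] < 0` for every `α ∈ (0, α₁)`; consequently
`ℤ` is not a `1`-compact local minimum for the total `V`-energy: for every `α₀ > 0`
there is `α ∈ [0, α₀)` with `Δ_ℤ^α(V; {0}) = ∑_{x ∈ ℤ*}[V(|x-α|)-V(|x|)] < 0`
(perturbing `B = {0}` to `{α}`). -/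
theorem statement11 (V : ℝ → ℝ) (hV : ContDiffOn ℝ 2 V (Set.Ioi (0 : ℝ)))
    (hvanish : ∀ r : ℝ, (5 : ℝ) / 2 ≤ r → V r = 0)
    (hV'1 : deriv V 1 = 0) (hV'2 : deriv V 2 = 0)
    (hV''1 : deriv (deriv V) 1 = -1) (hV''2 : deriv (deriv V) 2 = 1 / 3) :
    (∃ α1 : ℝ, 0 < α1 ∧ ∀ α : ℝ, 0 < α → α < α1 →
      (∑' x : {x : ℤ // x ≠ 0},
        (V |((x : ℤ) : ℝ) - α| - V |((x : ℤ) : ℝ)|)) < 0) ∧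
    ∀ α0 : ℝ, 0 < α0 → ∃ α : ℝ, 0 ≤ α ∧ α < α0 ∧
      (∑' x : {x : ℤ // x ≠ 0},
        (V |((x : ℤ) : ℝ) - α| - V |((x : ℤ) : ℝ)|)) < 0 := by
  -- first derivative exists everywhere on (0,∞)
  have hdV : ∀ x : ℝ, 0 < x → HasDerivAt V (deriv V x) x := fun x hx =>
    ((hV.differentiableOn (by norm_num)).differentiableAt
      (isOpen_Ioi.mem_nhds hx)).hasDerivAt
  have hC1 : ContDiffOn ℝ 1 (deriv V) (Set.Ioi (0:ℝ)) := by
    have := hV.deriv_of_isOpen (m := 1) isOpen_Ioi (by norm_num)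
    exact this
  have hd2V : ∀ x : ℝ, 0 < x → HasDerivAt (deriv V) (deriv (deriv V) x) x := fun x hx =>
    ((hC1.differentiableOn (by norm_num)).differentiableAt
      (isOpen_Ioi.mem_nhds hx)).hasDerivAt
  set g : ℝ → ℝ := fun a => V (1 - a) + V (1 + a) + V (2 - a) + V (2 + a) with hgdef
  set h : ℝ → ℝ := fun a =>
    -(deriv V (1 - a)) + deriv V (1 + a) - deriv V (2 - a) + deriv V (2 + a) with hhdef
  -- g has derivative h on (-1/2, 1/2)
  have hg : ∀ a : ℝ, |a| < 1/2 → HasDerivAt g (h a) a := by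
    intro a ha
    have ha' := abs_lt.1 ha
    have hsub : HasDerivAt (fun b : ℝ => 1 - b) (-1) a := by
      simpa using (hasDerivAt_id a).const_sub 1
    have hadd : HasDerivAt (fun b : ℝ => 1 + b) 1 a := by
      simpa using (hasDerivAt_id a).const_add 1
    have hsub2 : HasDerivAt (fun b : ℝ => 2 - b) (-1) a := by
      simpa using (hasDerivAt_id a).const_sub 2
    have hadd2 : HasDerivAt (fun b : ℝ => 2 + b) 1 a := by
      simpa using (hasDerivAt_id a).const_add 2
    have h1 := (hdV (1 - a) (by linarith)).comp a hsub
    have h2 := (hdV (1 + a) (by linarith)).comp a hadd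
    have h3 := (hdV (2 - a) (by linarith)).comp a hsub2
    have h4 := (hdV (2 + a) (by linarith)).comp a hadd2
    have := ((h1.add h2).add h3).add h4
    refine this.congr_deriv ?_
    simp [hhdef]; ring
  -- h has derivative -4/3 at 0 and h 0 = 0
  have hh0 : h 0 = 0 := by simp [hhdef, hV'1, hV'2]
  have hh : HasDerivAt h (-(4:ℝ)/3) 0 := by
    have hsub : HasDerivAt (fun b : ℝ => 1 - b) (-1) (0:ℝ) := by
      simpa using (hasDerivAt_id (0:ℝ)).const_sub 1
    have hadd : HasDerivAt (fun b : ℝ => 1 + b) 1 (0:ℝ) := by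
      simpa using (hasDerivAt_id (0:ℝ)).const_add 1
    have hsub2 : HasDerivAt (fun b : ℝ => 2 - b) (-1) (0:ℝ) := by
      simpa using (hasDerivAt_id (0:ℝ)).const_sub 2
    have hadd2 : HasDerivAt (fun b : ℝ => 2 + b) 1 (0:ℝ) := by
      simpa using (hasDerivAt_id (0:ℝ)).const_add 2
    have h1 := ((hd2V (1-(0:ℝ)) (by norm_num)).comp 0 hsub).neg
    have h2 := (hd2V (1+(0:ℝ)) (by norm_num)).comp 0 hadd
    have h3 := (hd2V (2-(0:ℝ)) (by norm_num)).comp 0 hsub2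
    have h4 := (hd2V (2+(0:ℝ)) (by norm_num)).comp 0 hadd2
    have := ((h1.add h2).sub h3).add h4
    refine this.congr_deriv ?_
    norm_num [hV''1, hV''2]
  -- h is negative on a right neighborhood of 0
  have hev : ∀ᶠ a in nhdsWithin (0:ℝ) (Set.Ioi 0), h a < 0 := by
    have H : Filter.Tendsto (slope h 0) (nhdsWithin (0:ℝ) {(0:ℝ)}ᶜ) (nhds (-(4:ℝ)/3)) :=
      hasDerivAt_iff_tendsto_slope.1 hh
    have H2 : ∀ᶠ a in nhdsWithin (0:ℝ) {(0:ℝ)}ᶜ, slope h 0 a < 0 :=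
      H.eventually_lt_const (by norm_num)
    have hle : nhdsWithin (0:ℝ) (Set.Ioi 0) ≤ nhdsWithin (0:ℝ) {(0:ℝ)}ᶜ :=
      nhdsWithin_mono 0 (fun x hx => ne_of_gt hx)
    filter_upwards [hle H2, self_mem_nhdsWithin] with a hs ha
    have ha0 : (0:ℝ) < a := ha
    have : slope h 0 a = h a / a := by simp [slope, hh0, div_eq_inv_mul]
    rw [this] at hs
    exact lt_of_not_ge fun hcon => absurd hs (not_lt.2 (div_nonneg hcon ha0.le))
  obtain ⟨u, hu, hsu⟩ := mem_nhdsGT_iff_exists_Ioo_subset.1 hev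
  set ε : ℝ := min u (1/4) with hεdef
  have hε0 : 0 < ε := lt_min hu (by norm_num)
  have hε4 : ε ≤ 1/4 := min_le_right _ _
  -- g α < g 0 for α ∈ (0, ε)
  have hmain : ∀ α : ℝ, 0 < α → α < ε → g α < g 0 := by
    intro α hα0 hαε
    have hsA : StrictAntiOn g (Set.Icc 0 α) := by
      apply strictAntiOn_of_deriv_neg (convex_Icc 0 α)
      · apply ContinuousOn.mono (s := Set.Icc (0:ℝ) α)
        · intro t ht
          have habs : |t| < 1/2 := by
            rw [abs_lt]; constructor <;> [linarith [ht.1]; linarith [ht.2, hαε, hε4]]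
          exact ((hg t habs).continuousAt).continuousWithinAt
        · exact le_rfl
      · intro t ht
        rw [interior_Icc] at ht
        have habs : |t| < 1/2 := by
          rw [abs_lt]; constructor <;> [linarith [ht.1]; linarith [ht.2, hαε, hε4]]
        rw [(hg t habs).deriv]
        exact hsu ⟨ht.1, lt_of_lt_of_le (lt_trans ht.2 hαε) (min_le_left _ _)⟩
    exact hsA (Set.left_mem_Icc.2 hα0.le) (Set.right_mem_Icc.2 hα0.le) hα0
  -- tsum reduction
  have hsum : ∀ α : ℝ, 0 < α → α ≤ 1/4 →
      (∑' x : {x : ℤ // x ≠ 0}, (V |((x : ℤ) : ℝ) - α| - V |((x : ℤ) : ℝ)|)) = g α - g 0 := by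
    intro α hα0 hα4
    set f : {x : ℤ // x ≠ 0} → ℝ := fun x => V |((x : ℤ) : ℝ) - α| - V |((x : ℤ) : ℝ)| with hfdef
    have h1 : (1 : ℤ) ≠ 0 := by decide
    have hm1 : (-1 : ℤ) ≠ 0 := by decide
    have h2 : (2 : ℤ) ≠ 0 := by decide
    have hm2 : (-2 : ℤ) ≠ 0 := by decide
    set s : Finset {x : ℤ // x ≠ 0} := {⟨1, h1⟩, ⟨-1, hm1⟩, ⟨2, h2⟩, ⟨-2, hm2⟩} with hsdef
    have hz : ∀ b ∉ s, f b = 0 := by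
      rintro ⟨b, hb⟩ hbs
      have hb3 : b ≤ -3 ∨ 3 ≤ b := by
        simp [hsdef, Subtype.ext_iff] at hbs
        omega
      have hb3' : (3:ℝ) ≤ |(b:ℝ)| := by
        rcases hb3 with hc | hc
        · have : ((b:ℤ):ℝ) ≤ -3 := by exact_mod_cast hc
          rw [abs_of_neg (by linarith)]; linarith
        · have : (3:ℝ) ≤ ((b:ℤ):ℝ) := by exact_mod_cast hc
          rw [abs_of_pos (by linarith)]; linarith
      have hz1 : V |(b:ℝ)| = 0 := hvanish _ (by linarith)
      have hz2 : V |(b:ℝ) - α| = 0 := by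
        apply hvanish
        have := abs_sub_abs_le_abs_sub (b:ℝ) α
        have hαabs : |α| ≤ 1/4 := by rw [abs_of_pos hα0]; exact hα4
        linarith
      simp [hfdef, hz1, hz2]
    rw [tsum_eq_sum hz]
    have hA1 : |(1:ℝ) - α| = 1 - α := abs_of_pos (by linarith)
    have hA2 : |(-1:ℝ) - α| = 1 + α := by rw [abs_of_neg (by linarith)]; ring
    have hA3 : |(2:ℝ) - α| = 2 - α := abs_of_pos (by linarith)
    have hA4 : |(-2:ℝ) - α| = 2 + α := by rw [abs_of_neg (by linarith)]; ring
    rw [hsdef]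
    rw [Finset.sum_insert (by norm_num [Subtype.ext_iff]), Finset.sum_insert (by norm_num [Subtype.ext_iff]),
      Finset.sum_insert (by norm_num [Subtype.ext_iff]), Finset.sum_singleton]
    simp only [hfdef, hgdef]
    push_cast
    rw [hA1, hA2, hA3, hA4]
    norm_num
    ring
  refine ⟨⟨ε, hε0, fun α hα0 hαε => ?_⟩, fun α0 hα00 => ?_⟩
  · rw [hsum α hα0 (le_trans hαε.le hε4)]
    linarith [hmain α hα0 hαε]
  · refine ⟨min (α0/2) (ε/2), le_of_lt (lt_min (by linarith) (by linarith)), ?_, ?_⟩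
    · exact lt_of_le_of_lt (min_le_left _ _) (by linarith)
    · have hp : 0 < min (α0/2) (ε/2) := lt_min (by linarith) (by linarith)
      have hlt : min (α0/2) (ε/2) < ε := lt_of_le_of_lt (min_le_right _ _) (by linarith)
      rw [hsum _ hp (le_trans hlt.le hε4)]
      linarith [hmain _ hp hlt]
end
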